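/- arXiv:0910.1228 — 5 statements merged into one kernel-verified Lean document; each statement's English description precedes it below -/
import Mathlib

section
/- Let $(X,d,\mu)$ be a doubling metric measure space with doubling constant $c_\mu$, let $f$ be a non-negative locally integrable function on $X$, fix a ball $B_0=B(x_0,R)$, and assume $\lambda_0 \ge \frac{1}{\mu(B_0)}\int_{11B_0} f\,d\mu$. Then there exists a countable (possibly finite) family of pairwise disjoint balls $\{B_i\}$ centered at points of $B_0$ with $5B_i\subset 11B_0$ such that: (i) $f(x)\le\lambda_0$ for $\mu$-a.e. $x\in B_0\setminus\bigcup_i 5B_i$; (ii) $\lambda_0 < \fint_{B_i} f\,d\mu \le c_\mu^3\lambda_0$ for every $i$; (iii) $c_\mu^{-3}\lambda_0 < \fint_{5B_i} f\,d\mu \le \lambda_0$ for every $i$. -/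
open MeasureTheory Metric Set ENNReal Filter
open scoped NNReal Topology

/-- `(X, d, μ)` is a doubling metric measure space with doubling constant `cμ`:
every ball has positive finite measure and `μ(2B) ≤ cμ · μ(B)` for all balls `B`. -/
def IsDoubling {X : Type*} [MetricSpace X] [MeasurableSpace X]
    (μ : Measure X) (cμ : ℝ) : Prop :=
  (∀ (x : X) (r : ℝ), 0 < r → 0 < μ (Metric.ball x r) ∧ μ (Metric.ball x r) < ⊤) ∧
  ∀ (x : X) (r : ℝ), 0 < r → μ (Metric.ball x (2 * r)) ≤ ENNReal.ofReal cμ * μ (Metric.ball x r)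

theorem IsDoubling.pow {X : Type*} [MetricSpace X] [MeasurableSpace X]
    {μ : Measure X} {cμ : ℝ} (hd : IsDoubling μ cμ) (x : X) {r : ℝ} (hr : 0 < r) (k : ℕ) :
    μ (Metric.ball x (2 ^ k * r)) ≤ (ENNReal.ofReal cμ) ^ k * μ (Metric.ball x r) := by
  induction k with
  | zero => simp
  | succ n ih =>
    have h2 : (2:ℝ) ^ (n+1) * r = 2 * (2 ^ n * r) := by ring
    rw [h2]
    calc μ (ball x (2 * (2 ^ n * r))) ≤ ENNReal.ofReal cμ * μ (ball x (2 ^ n * r)) :=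
          hd.2 x _ (by positivity)
    _ ≤ ENNReal.ofReal cμ * ((ENNReal.ofReal cμ) ^ n * μ (ball x r)) := by gcongr
    _ = (ENNReal.ofReal cμ) ^ (n + 1) * μ (ball x r) := by ring

theorem exists_injOn_image_eq {α : Type*} {u : Set α} (hc : u.Countable) (hne : u.Nonempty) :
    ∃ (S : Set ℕ) (c : ℕ → α), Set.InjOn c S ∧ c '' S = u := by
  classical
  obtain ⟨g, rfl⟩ := hc.exists_eq_range hne
  refine ⟨{n | ∀ m < n, g m ≠ g n}, g, ?_, ?_⟩
  · intro i hi j hj hij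
    rcases lt_trichotomy i j with h | h | h
    · exact absurd hij (hj i h)
    · exact h
    · exact absurd hij.symm (hi j h)
  · apply Subset.antisymm
    · rintro - ⟨n, -, rfl⟩; exact mem_range_self n
    · rintro - ⟨k, rfl⟩
      have hex : ∃ m, g m = g k := ⟨k, rfl⟩
      refine ⟨Nat.find hex, fun m hm hgm => ?_, Nat.find_spec hex⟩
      exact Nat.find_min hex hm (hgm.trans (Nat.find_spec hex))

theorem IsDoubling.totallyBounded {X : Type*} [MetricSpace X] [MeasurableSpace X]
    [OpensMeasurableSpace X] {μ : Measure X} {cμ : ℝ} (hcμ : 1 ≤ cμ) (hd : IsDoubling μ cμ) (x₀ : X) (ρ : ℝ) (hρ : 0 < ρ) :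
    TotallyBounded (Metric.ball x₀ ρ) := by
  classical
  by_contra h
  rw [Metric.totallyBounded_iff] at h
  push_neg at h
  obtain ⟨ε, εpos, H⟩ := h
  -- construct an ε-separated sequence in the ball
  have Hg : ∀ t : Finset X, ∃ z, z ∈ ball x₀ ρ ∧ ∀ y ∈ t, ε ≤ dist z y := by
    intro t
    obtain ⟨z, hz1, hz2⟩ := not_subset.1 (H t t.finite_toSet)
    refine ⟨z, hz1, fun y hy => ?_⟩
    by_contra hlt
    exact hz2 (mem_biUnion hy (by simpa using lt_of_not_ge hlt))
  choose g hg1 hg2 using Hg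
  set v : ℕ → Finset X := fun n => Nat.rec ∅ (fun _ t => insert (g t) t) n with hv
  set u : ℕ → X := fun n => g (v n) with hu
  have hvs : ∀ n, v (n+1) = insert (u n) (v n) := fun n => rfl
  have hvm : Monotone v := by
    apply monotone_nat_of_le_succ
    intro n
    rw [hvs]
    exact Finset.subset_insert _ _
  have humem : ∀ {m n}, m < n → u m ∈ v n := by
    intro m n hmn
    have : u m ∈ v (m+1) := by rw [hvs]; exact Finset.mem_insert_self _ _
    exact hvm hmn this
  have hsep : ∀ {m n}, m < n → ε ≤ dist (u n) (u m) := fun {m n} hmn => hg2 _ _ (humem hmn)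
  have huball : ∀ n, u n ∈ ball x₀ ρ := fun n => hg1 _
  -- measure contradiction
  obtain ⟨k, hk⟩ := pow_unbounded_of_one_lt ((2*ρ + ε)/(ε/2)) one_lt_two
  have hk' : 2*ρ + ε ≤ 2 ^ k * (ε/2) := by
    rw [div_lt_iff₀ (by positivity)] at hk
    linarith
  set C := (ENNReal.ofReal cμ) ^ k with hC
  set M := μ (ball x₀ (ρ + ε)) with hM
  have hMpos : 0 < M := (hd.1 x₀ _ (by linarith)).1
  have hMfin : M < ⊤ := (hd.1 x₀ _ (by linarith)).2
  have hlow : ∀ n, M / C ≤ μ (ball (u n) (ε/2)) := by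
    intro n
    have h1 : ball x₀ (ρ + ε) ⊆ ball (u n) (2 ^ k * (ε/2)) := by
      apply ball_subset_ball'
      have := mem_ball.1 (huball n)
      rw [dist_comm] at this
      linarith
    have h2 : M ≤ C * μ (ball (u n) (ε/2)) :=
      le_trans (measure_mono h1) (hd.pow (u n) (by positivity) k)
    exact ENNReal.div_le_of_le_mul (by rwa [mul_comm] at h2)
  have hCne : C ≠ 0 := by
    apply pow_ne_zero
    exact (lt_of_lt_of_le one_pos (ENNReal.one_le_ofReal.2 hcμ)).ne'
  have hCfin : C ≠ ⊤ := by
    apply pow_ne_top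
    exact ENNReal.ofReal_ne_top
  have hball5 : ∀ n, ball (u n) (ε/2) ⊆ ball x₀ (ρ + ε) := by
    intro n
    apply ball_subset_ball'
    have := mem_ball.1 (huball n)
    linarith
  have key : ∀ N : ℕ, (N : ℝ≥0∞) * (M / C) ≤ M := by
    intro N
    have hdisj : (↑(Finset.range N) : Set ℕ).PairwiseDisjoint
        (fun i => ball (u i) (ε/2)) := by
      intro i _ j _ hij
      have hdist : ε ≤ dist (u i) (u j) := by
        rcases lt_or_gt_of_ne hij with h | h
        · rw [dist_comm]; exact hsep h
        · exact hsep h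
      exact ball_disjoint_ball (by linarith)
    calc (N : ℝ≥0∞) * (M / C) = ∑ _i ∈ Finset.range N, (M / C) := by
          simp [Finset.sum_const, nsmul_eq_mul]
    _ ≤ ∑ i ∈ Finset.range N, μ (ball (u i) (ε/2)) :=
        Finset.sum_le_sum fun i _ => hlow i
    _ = μ (⋃ i ∈ Finset.range N, ball (u i) (ε/2)) :=
        (measure_biUnion_finset hdisj fun i _ => measurableSet_ball).symm
    _ ≤ M := measure_mono (iUnion₂_subset fun i _ => hball5 i)
  have hq : M / C ≠ 0 := (ENNReal.div_pos hMpos.ne' hCfin).ne'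
  obtain ⟨N, hN⟩ := ENNReal.exists_nat_mul_gt hq hMfin.ne
  exact absurd (key N) (not_le.2 hN)

theorem IsDoubling.secondCountable {X : Type*} [MetricSpace X] [MeasurableSpace X]
    [OpensMeasurableSpace X] {μ : Measure X} {cμ : ℝ} (hcμ : 1 ≤ cμ)
    (hd : IsDoubling μ cμ) (x₀ : X) : SecondCountableTopology X := by
  have hsep : TopologicalSpace.SeparableSpace X := by
    rw [← TopologicalSpace.isSeparable_univ_iff]
    have hu : (univ : Set X) = ⋃ n : ℕ, Metric.ball x₀ (n + 1) := by
      ext y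
      simp only [mem_univ, mem_iUnion, mem_ball, true_iff]
      obtain ⟨n, hn⟩ := exists_nat_gt (dist y x₀)
      exact ⟨n, by linarith⟩
    rw [hu]
    exact TopologicalSpace.IsSeparable.iUnion fun n =>
      (hd.totallyBounded hcμ x₀ _ (by positivity)).isSeparable
  exact UniformSpace.secondCountable_of_separable X


/-- `{B i = ball (c i) (r i)}_{i ∈ S}` is a family of Calderón–Zygmund balls for the
nonnegative function `g` at level `lam` relative to the ball `B₀ = B(x₀, R)`:
a countable family of pairwise disjoint balls centered at points of `B₀` with
`5Bᵢ ⊆ 11B₀`, such that `g ≤ lam` a.e. on `B₀ \ ⋃ᵢ 5Bᵢ`,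
`lam < ⨍_{Bᵢ} g ≤ cμ³ lam` and `cμ⁻³ lam < ⨍_{5Bᵢ} g ≤ lam`. -/
def IsCZBalls {X : Type*} [MetricSpace X] [MeasurableSpace X]
    (μ : Measure X) (cμ : ℝ) (g : X → ℝ) (x₀ : X) (R lam : ℝ)
    (S : Set ℕ) (c : ℕ → X) (r : ℕ → ℝ) : Prop :=
  (∀ i ∈ S, 0 < r i) ∧
  (∀ i ∈ S, c i ∈ Metric.ball x₀ R) ∧
  (∀ i ∈ S, Metric.ball (c i) (5 * r i) ⊆ Metric.ball x₀ (11 * R)) ∧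
  (S.PairwiseDisjoint fun i => Metric.ball (c i) (r i)) ∧
  (∀ᵐ x ∂μ, x ∈ Metric.ball x₀ R \ (⋃ i ∈ S, Metric.ball (c i) (5 * r i)) → g x ≤ lam) ∧
  (∀ i ∈ S, lam < ⨍ x in Metric.ball (c i) (r i), g x ∂μ ∧
      ⨍ x in Metric.ball (c i) (r i), g x ∂μ ≤ cμ ^ 3 * lam) ∧
  (∀ i ∈ S, lam / cμ ^ 3 < ⨍ x in Metric.ball (c i) (5 * r i), g x ∂μ ∧
      ⨍ x in Metric.ball (c i) (5 * r i), g x ∂μ ≤ lam)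

/-- Calderón–Zygmund decomposition in a doubling metric measure space:
if `f ≥ 0` is locally integrable (integrable on every ball), `B₀ = B(x₀, R)` and
`λ₀ ≥ μ(B₀)⁻¹ ∫_{11B₀} f dμ`, then there is a countable family of Calderón–Zygmund
balls for `f` at level `λ₀` relative to `B₀`. -/
theorem calderon_zygmund_decomposition {X : Type*} [MetricSpace X] [MeasurableSpace X]
    [BorelSpace X]
    (μ : Measure X) (cμ : ℝ) (hcμ : 1 ≤ cμ) (hdoub : IsDoubling μ cμ)
    (f : X → ℝ) (hf0 : ∀ x, 0 ≤ f x)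
    (hloc : ∀ (x : X) (r : ℝ), IntegrableOn f (Metric.ball x r) μ)
    (x₀ : X) (R : ℝ) (hR : 0 < R) (lam₀ : ℝ)
    (hlam : (μ (Metric.ball x₀ R)).toReal⁻¹ *
        ∫ x in Metric.ball x₀ (11 * R), f x ∂μ ≤ lam₀) :
    ∃ (S : Set ℕ) (c : ℕ → X) (r : ℕ → ℝ), IsCZBalls μ cμ f x₀ R lam₀ S c r := by
  classical
  have hcμ0 : (0:ℝ) < cμ := lt_of_lt_of_le one_pos hcμ
  have hpos : ∀ (y : X) (t : ℝ), 0 < t → 0 < μ (ball y t) := fun y t ht => (hdoub.1 y t ht).1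
  have hfin : ∀ (y : X) (t : ℝ), μ (ball y t) < ⊤ := by
    intro y t
    rcases le_or_gt t 0 with h | h
    · simp [ball_eq_empty.2 h]
    · exact (hdoub.1 y t h).2
  haveI : SecondCountableTopology X := hdoub.secondCountable hcμ x₀
  haveI : IsLocallyFiniteMeasure μ :=
    ⟨fun x => ⟨ball x 1, ball_mem_nhds x one_pos, hfin x 1⟩⟩
  haveI : IsUnifLocDoublingMeasure μ := by
    refine ⟨⟨cμ.toNNReal ^ 2, ?_⟩⟩
    filter_upwards [self_mem_nhdsWithin] with ε hε x
    have hε0 : (0:ℝ) < ε := hε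
    have h2 : μ (ball x (4 * ε)) ≤ (ENNReal.ofReal cμ) ^ 2 * μ (ball x ε) := by
      have h := hdoub.pow x hε0 2
      have he : (2:ℝ) ^ 2 * ε = 4 * ε := by norm_num
      rwa [he] at h
    have hco : ((cμ.toNNReal ^ 2 : ℝ≥0) : ℝ≥0∞) = (ENNReal.ofReal cμ) ^ 2 := by
      rw [ENNReal.coe_pow]; rfl
    calc μ (closedBall x (2 * ε)) ≤ μ (ball x (4 * ε)) :=
          measure_mono (closedBall_subset_ball (by linarith))
    _ ≤ (ENNReal.ofReal cμ) ^ 2 * μ (ball x ε) := h2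
    _ ≤ (ENNReal.ofReal cμ) ^ 2 * μ (closedBall x ε) := by
        gcongr; exact ball_subset_closedBall
    _ = (cμ.toNNReal ^ 2 : ℝ≥0) * μ (closedBall x ε) := by rw [hco]
  have hfloc : LocallyIntegrable f μ := fun x => ⟨ball x 1, ball_mem_nhds x one_pos, hloc x 1⟩
  -- basic facts about averages over balls
  have havg_eq : ∀ (y : X) (t : ℝ),
      (⨍ z in ball y t, f z ∂μ) = (μ (ball y t)).toReal⁻¹ * ∫ z in ball y t, f z ∂μ := by
    intro y t
    rw [setAverage_eq, smul_eq_mul, measureReal_def]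
  have hint_nonneg : ∀ (s : Set X), 0 ≤ ∫ z in s, f z ∂μ := fun s => integral_nonneg hf0
  have hmono : ∀ (y : X) (t : ℝ) (y' : X) (t' : ℝ), ball y t ⊆ ball y' t' →
      ∫ z in ball y t, f z ∂μ ≤ ∫ z in ball y' t', f z ∂μ := by
    intro y t y' t' hsub
    exact setIntegral_mono_set (hloc y' t') (Filter.Eventually.of_forall hf0)
      (HasSubset.Subset.eventuallyLE hsub)
  have htoReal_pos : ∀ (y : X) (t : ℝ), 0 < t → 0 < (μ (ball y t)).toReal := fun y t ht =>
    ENNReal.toReal_pos (hpos y t ht).ne' (hfin y t).ne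
  have havg_nonneg : ∀ (y : X) (t : ℝ), 0 ≤ ⨍ z in ball y t, f z ∂μ := by
    intro y t
    rw [havg_eq]
    exact mul_nonneg (inv_nonneg.2 ENNReal.toReal_nonneg) (hint_nonneg _)
  have h0lam : 0 ≤ lam₀ :=
    le_trans (mul_nonneg (inv_nonneg.2 ENNReal.toReal_nonneg) (hint_nonneg _)) hlam
  -- large balls have small averages
  have hbig : ∀ y ∈ ball x₀ R, ∀ s : ℝ, 2 * R ≤ s → s ≤ 10 * R →
      (⨍ z in ball y s, f z ∂μ) ≤ lam₀ := by
    intro y hy s h1 h2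
    have hy' : dist y x₀ < R := mem_ball.1 hy
    have hsub1 : ball x₀ R ⊆ ball y s := ball_subset_ball' (by rw [dist_comm]; linarith)
    have hsub2 : ball y s ⊆ ball x₀ (11 * R) := ball_subset_ball' (by linarith)
    have e1 : ∫ z in ball y s, f z ∂μ ≤ ∫ z in ball x₀ (11 * R), f z ∂μ := hmono _ _ _ _ hsub2
    have e2 : (μ (ball y s)).toReal⁻¹ ≤ (μ (ball x₀ R)).toReal⁻¹ := by
      apply inv_anti₀ (htoReal_pos x₀ R hR)
      exact (ENNReal.toReal_le_toReal (hfin x₀ R).ne (hfin y s).ne).2 (measure_mono hsub1)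
    calc (⨍ z in ball y s, f z ∂μ) = (μ (ball y s)).toReal⁻¹ * ∫ z in ball y s, f z ∂μ :=
        havg_eq y s
    _ ≤ (μ (ball x₀ R)).toReal⁻¹ * ∫ z in ball x₀ (11 * R), f z ∂μ :=
        mul_le_mul e2 e1 (hint_nonneg _) (inv_nonneg.2 ENNReal.toReal_nonneg)
    _ ≤ lam₀ := hlam
  -- comparison of averages over B and 5B
  have hC3 : ∀ (y : X) (t : ℝ), 0 < t →
      (μ (ball y (5 * t))).toReal ≤ cμ ^ 3 * (μ (ball y t)).toReal := by
    intro y t ht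
    have h8 : μ (ball y (5 * t)) ≤ (ENNReal.ofReal cμ) ^ 3 * μ (ball y t) := by
      have h := hdoub.pow y ht 3
      have he : (2:ℝ) ^ 3 * t = 8 * t := by norm_num
      rw [he] at h
      exact le_trans (measure_mono (ball_subset_ball (by linarith : 5 * t ≤ 8 * t))) h
    have hfin3 : (ENNReal.ofReal cμ) ^ 3 * μ (ball y t) ≠ ⊤ :=
      ENNReal.mul_ne_top (ENNReal.pow_ne_top ENNReal.ofReal_ne_top) (hfin y t).ne
    have := (ENNReal.toReal_le_toReal (hfin y (5*t)).ne hfin3).2 h8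
    rwa [ENNReal.toReal_mul, ENNReal.toReal_pow, ENNReal.toReal_ofReal hcμ0.le] at this
  have hkey : ∀ (y : X) (t : ℝ), 0 < t →
      (⨍ z in ball y t, f z ∂μ) ≤ cμ ^ 3 * ⨍ z in ball y (5 * t), f z ∂μ := by
    intro y t ht
    have ha : 0 < (μ (ball y t)).toReal := htoReal_pos y t ht
    have hb : 0 < (μ (ball y (5 * t))).toReal := htoReal_pos y (5 * t) (by linarith)
    have hI : ∫ z in ball y t, f z ∂μ ≤ ∫ z in ball y (5 * t), f z ∂μ :=
      hmono _ _ _ _ (ball_subset_ball (by linarith))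
    have h5 : ∫ z in ball y (5 * t), f z ∂μ =
        (μ (ball y (5 * t))).toReal * ⨍ z in ball y (5 * t), f z ∂μ := by
      rw [havg_eq]
      field_simp
    calc (⨍ z in ball y t, f z ∂μ) = (μ (ball y t)).toReal⁻¹ * ∫ z in ball y t, f z ∂μ :=
        havg_eq y t
    _ ≤ (μ (ball y t)).toReal⁻¹ *
        ((μ (ball y (5 * t))).toReal * ⨍ z in ball y (5 * t), f z ∂μ) := by
        rw [← h5]
        exact mul_le_mul_of_nonneg_left hI (inv_nonneg.2 ha.le)
    _ = ((μ (ball y (5 * t))).toReal / (μ (ball y t)).toReal) *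
        ⨍ z in ball y (5 * t), f z ∂μ := by ring
    _ ≤ cμ ^ 3 * ⨍ z in ball y (5 * t), f z ∂μ := by
        apply mul_le_mul_of_nonneg_right _ (havg_nonneg y (5 * t))
        rw [div_le_iff₀ ha]
        exact hC3 y t ht
  -- selection of a good radius
  have hsel : ∀ y ∈ ball x₀ R, ∀ t : ℝ, 0 < t → t ≤ 2 * R → lam₀ < (⨍ z in ball y t, f z ∂μ) →
      ∃ ρ : ℝ, 0 < ρ ∧ ρ ≤ 2 * R ∧ lam₀ < (⨍ z in ball y ρ, f z ∂μ) ∧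
        (⨍ z in ball y (5 * ρ), f z ∂μ) ≤ lam₀ := by
    intro y hy t ht ht2 hlt
    set T := {s : ℝ | 0 < s ∧ s ≤ 10 * R ∧ lam₀ < ⨍ z in ball y s, f z ∂μ} with hT
    have htT : t ∈ T := ⟨ht, by linarith, hlt⟩
    have hTne : T.Nonempty := ⟨t, htT⟩
    have hT2R : ∀ s ∈ T, s ≤ 2 * R := by
      intro s hs
      by_contra hgt
      push_neg at hgt
      exact absurd (hbig y hy s hgt.le hs.2.1) (not_le.2 hs.2.2)
    have hbdd : BddAbove T := ⟨2 * R, hT2R⟩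
    have hσt : t ≤ sSup T := le_csSup hbdd htT
    have hσpos : 0 < sSup T := lt_of_lt_of_le ht hσt
    obtain ⟨ρ, hρT, hρgt⟩ := exists_lt_of_lt_csSup hTne (show sSup T / 5 < sSup T by linarith)
    refine ⟨ρ, hρT.1, hT2R ρ hρT, hρT.2.2, ?_⟩
    by_contra hc
    push_neg at hc
    have h5T : (5 * ρ) ∈ T := ⟨by linarith [hρT.1], by linarith [hT2R ρ hρT], hc⟩
    have : 5 * ρ ≤ sSup T := le_csSup hbdd h5T
    linarith
  -- the "bad" set and chosen radii
  set E := {y : X | y ∈ ball x₀ R ∧ ∃ ρ : ℝ, 0 < ρ ∧ ρ ≤ 2 * R ∧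
      lam₀ < (⨍ z in ball y ρ, f z ∂μ) ∧ (⨍ z in ball y (5 * ρ), f z ∂μ) ≤ lam₀} with hE
  have hEex : ∀ y ∈ E, ∃ ρ : ℝ, 0 < ρ ∧ ρ ≤ 2 * R ∧
      lam₀ < (⨍ z in ball y ρ, f z ∂μ) ∧ (⨍ z in ball y (5 * ρ), f z ∂μ) ≤ lam₀ :=
    fun y hy => hy.2
  choose! rad hrad1 hrad2 hrad3 hrad4 using hEex
  -- Vitali covering lemma
  obtain ⟨u, huE, hu_disj, hu_cov⟩ :=
    Vitali.exists_disjoint_subfamily_covering_enlargement (fun y : X => ball y (rad y)) E rad 2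
      one_lt_two (fun y hy => (hrad1 y hy).le) (2 * R) (fun y hy => hrad2 y hy)
      (fun y hy => ⟨y, mem_ball_self (hrad1 y hy)⟩)
  have hcov5 : ∀ y ∈ E, ∃ b ∈ u, y ∈ ball b (5 * rad b) := by
    intro y hy
    obtain ⟨b, hbu, ⟨z, hz1, hz2⟩, hle⟩ := hu_cov y hy
    have hbE : b ∈ E := huE hbu
    have h0 : 0 < rad b := hrad1 b hbE
    have h1 : dist z y < rad y := mem_ball.1 hz1
    have h2 : dist z b < rad b := mem_ball.1 hz2
    have h3 : dist y b ≤ dist y z + dist z b := dist_triangle y z b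
    rw [dist_comm] at h1
    exact ⟨b, hbu, mem_ball.2 (by linarith)⟩
  -- countability of the family
  have hucnt : u.Countable := by
    have hsub3 : ∀ b ∈ u, ball b (rad b) ⊆ ball x₀ (3 * R) := by
      intro b hbu
      have hbE : b ∈ E := huE hbu
      have h2 : dist b x₀ < R := mem_ball.1 hbE.1
      exact ball_subset_ball' (by linarith [hrad2 b hbE])
    have hUfin : μ (⋃ b : u, ball (b : X) (rad b)) ≠ ⊤ := by
      refine (lt_of_le_of_lt (measure_mono ?_) (hfin x₀ (3 * R))).ne
      exact iUnion_subset fun b => hsub3 b b.2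
    have hpd : Pairwise (Function.onFun Disjoint fun b : u => ball (b : X) (rad b)) := by
      intro i j hij
      exact hu_disj i.2 j.2 (fun h => hij (Subtype.ext h))
    have hcnt := MeasureTheory.Measure.countable_meas_pos_of_disjoint_of_meas_iUnion_ne_top μ
      (fun b : u => measurableSet_ball) hpd hUfin
    have : ({i : u | 0 < μ (ball (i : X) (rad i))}) = Set.univ := by
      apply eq_univ_of_forall
      intro b
      exact hpos _ _ (hrad1 _ (huE b.2))
    rw [this, Set.countable_univ_iff] at hcnt
    exact Set.countable_coe_iff.1 hcnt
  -- bridging closed-ball averages to open-ball averages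
  have hbridge : ∀ (y : X) (t : ℝ), 0 < t → lam₀ < (⨍ z in closedBall y t, f z ∂μ) →
      ∃ s : ℝ, 0 < s ∧ s ≤ 2 * t ∧ lam₀ < ⨍ z in ball y s, f z ∂μ := by
    intro y t ht hlt
    set sn : ℕ → Set X := fun n => ball y (t + t / (n + 1)) with hsn
    have hsnm : ∀ n, MeasurableSet (sn n) := fun n => measurableSet_ball
    have hanti : Antitone sn := by
      intro m n hmn
      apply ball_subset_ball
      have hc : ((m:ℝ) + 1) ≤ ((n:ℝ) + 1) := by
        have h := (Nat.cast_le (α := ℝ)).2 hmn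
        linarith
      have : t / ((n:ℝ) + 1) ≤ t / ((m:ℝ) + 1) :=
        div_le_div_of_nonneg_left ht.le (by positivity) hc
      linarith
    have hiInter : (⋂ n, sn n) = closedBall y t := by
      apply Subset.antisymm
      · intro z hz
        rw [mem_closedBall]
        refine le_of_forall_pos_lt_add fun ε hε => ?_
        obtain ⟨n, hn⟩ := exists_nat_gt (t / ε)
        have h1 : dist z y < t + t / (n + 1) := mem_ball.1 (mem_iInter.1 hz n)
        have h2 : t / ((n:ℝ) + 1) < ε := by
          rw [div_lt_iff₀ (by positivity)]
          rw [div_lt_iff₀ hε] at hn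
          nlinarith
        linarith
      · intro z hz
        rw [mem_iInter]
        intro n
        have h1 : dist z y ≤ t := mem_closedBall.1 hz
        have h2 : 0 < t / ((n:ℝ) + 1) := by positivity
        exact mem_ball.2 (by linarith)
    have hintlim : Tendsto (fun n => ∫ z in sn n, f z ∂μ) atTop
        (𝓝 (∫ z in closedBall y t, f z ∂μ)) := by
      have h0int : IntegrableOn f (sn 0) μ := by
        simp only [hsn]
        exact hloc y _
      have h := tendsto_setIntegral_of_antitone hsnm hanti ⟨0, h0int⟩
      rwa [hiInter] at h
    have hcbfin : μ (closedBall y t) ≠ ⊤ :=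
      ((measure_mono (closedBall_subset_ball (lt_add_one t))).trans_lt (hfin y (t + 1))).ne
    have hcbpos : 0 < (μ (closedBall y t)).toReal :=
      ENNReal.toReal_pos (fun h0 => (hpos y t ht).ne'
        (le_antisymm (h0 ▸ measure_mono ball_subset_closedBall) zero_le)) hcbfin
    have hmeaslim : Tendsto (fun n => (μ (sn n)).toReal) atTop
        (𝓝 ((μ (closedBall y t)).toReal)) := by
      have h1 : Tendsto (fun n => μ (sn n)) atTop (𝓝 (μ (closedBall y t))) := by
        have h := tendsto_measure_iInter_atTop
          (fun n => (hsnm n).nullMeasurableSet) hanti ⟨0, (hfin y _).ne⟩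
        rwa [hiInter] at h
      exact (ENNReal.tendsto_toReal hcbfin).comp h1
    have havglim : Tendsto (fun n => ⨍ z in sn n, f z ∂μ) atTop
        (𝓝 (⨍ z in closedBall y t, f z ∂μ)) := by
      have h := (hmeaslim.inv₀ hcbpos.ne').mul hintlim
      simp only [setAverage_eq, smul_eq_mul]
      exact h
    obtain ⟨n, hn⟩ := (havglim.eventually_const_lt hlt).exists
    refine ⟨t + t / (n + 1), by positivity, ?_, hn⟩
    have h3 : t / ((n:ℝ) + 1) ≤ t := by
      rw [div_le_iff₀ (by positivity)]
      nlinarith [Nat.cast_nonneg (α := ℝ) n]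
    linarith
  -- almost every point of B₀ with f x > lam₀ lies in E
  have haeE : ∀ᵐ x ∂μ, x ∈ ball x₀ R → ¬ (f x ≤ lam₀) → x ∈ E := by
    filter_upwards [IsUnifLocDoublingMeasure.ae_tendsto_average (μ := μ) hfloc 1]
      with x hx hxB hxf
    push_neg at hxf
    set δ : ℕ → ℝ := fun n => R / (n + 1) with hδ
    have hδpos : ∀ n, 0 < δ n := fun n => by positivity
    have hδlim : Tendsto δ atTop (𝓝[>] (0:ℝ)) := by
      rw [tendsto_nhdsWithin_iff]
      constructor
      · have h := tendsto_one_div_add_atTop_nhds_zero_nat (𝕜 := ℝ)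
        have he : δ = fun n : ℕ => R * (1 / ((n:ℝ) + 1)) := by
          funext n
          rw [hδ]
          ring
        rw [he]
        simpa using h.const_mul R
      · exact Filter.Eventually.of_forall fun n => hδpos n
    have hx' := hx (fun _ => x) δ hδlim (Filter.Eventually.of_forall fun j => by
      rw [mem_closedBall, dist_self, one_mul]
      exact (hδpos j).le)
    obtain ⟨n, hn⟩ := (hx'.eventually_const_lt hxf).exists
    obtain ⟨s, hs0, hs2, hslam⟩ := hbridge x (δ n) (hδpos n) hn
    have hδR : δ n ≤ R := by
      rw [hδ]
      rw [div_le_iff₀ (by positivity)]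
      nlinarith [Nat.cast_nonneg (α := ℝ) n]
    exact ⟨hxB, hsel x hxB s hs0 (by linarith) hslam⟩
  -- conclude
  rcases u.eq_empty_or_nonempty with hu0 | hune
  · -- empty family
    have hE0 : E = ∅ := by
      rw [eq_empty_iff_forall_notMem]
      intro y hy
      obtain ⟨b, hbu, -⟩ := hcov5 y hy
      rw [hu0] at hbu
      exact notMem_empty b hbu
    refine ⟨∅, fun _ => x₀, fun _ => 1, ?_, ?_, ?_, ?_, ?_, ?_, ?_⟩
    · exact fun i hi => absurd hi (notMem_empty i)
    · exact fun i hi => absurd hi (notMem_empty i)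
    · exact fun i hi => absurd hi (notMem_empty i)
    · exact pairwiseDisjoint_empty
    · filter_upwards [haeE] with x hx hmem
      by_contra hcon
      have : x ∈ E := hx hmem.1 hcon
      rw [hE0] at this
      exact notMem_empty x this
    · exact fun i hi => absurd hi (notMem_empty i)
    · exact fun i hi => absurd hi (notMem_empty i)
  · obtain ⟨S, c, hinj, himg⟩ := exists_injOn_image_eq hucnt hune
    have hcmem : ∀ i ∈ S, c i ∈ u := fun i hi => himg ▸ mem_image_of_mem c hi
    have hcE : ∀ i ∈ S, c i ∈ E := fun i hi => huE (hcmem i hi)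
    refine ⟨S, c, fun n => rad (c n), ?_, ?_, ?_, ?_, ?_, ?_, ?_⟩
    · exact fun i hi => hrad1 _ (hcE i hi)
    · exact fun i hi => (hcE i hi).1
    · intro i hi
      apply ball_subset_ball'
      have h1 := hrad2 _ (hcE i hi)
      have h2 : dist (c i) x₀ < R := mem_ball.1 (hcE i hi).1
      linarith
    · intro i hi j hj hij
      exact hu_disj (hcmem i hi) (hcmem j hj) (fun h => hij (hinj hi hj h))
    · filter_upwards [haeE] with x hx hmem
      by_contra hcon
      have hxE : x ∈ E := hx hmem.1 hcon
      obtain ⟨b, hbu, hxb⟩ := hcov5 x hxE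
      rw [← himg] at hbu
      obtain ⟨i, hiS, rfl⟩ := hbu
      exact hmem.2 (mem_biUnion hiS hxb)
    · intro i hi
      have h0 := hrad1 _ (hcE i hi)
      have h1 := hrad3 _ (hcE i hi)
      have h4 := hrad4 _ (hcE i hi)
      exact ⟨h1, (hkey (c i) (rad (c i)) h0).trans (mul_le_mul_of_nonneg_left h4 (by positivity))⟩
    · intro i hi
      have h0 := hrad1 _ (hcE i hi)
      have h1 := hrad3 _ (hcE i hi)
      have h4 := hrad4 _ (hcE i hi)
      have hk := hkey (c i) (rad (c i)) h0
      refine ⟨?_, h4⟩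
      rw [div_lt_iff₀ (by positivity)]
      nlinarith
end

section
/- Let $(X,d,\mu)$ be a doubling metric measure space with doubling constant $c_\mu$, let $f$ be a non-negative locally integrable function on $X$, fix a ball $B_0=B(x_0,R)$, and let $\frac{1}{\mu(B_0)}\int_{11B_0}f\,d\mu \le \lambda_0\le\lambda_1\le\cdots\le\lambda_N$. Then for each $n=0,\dots,N$ there exists a countable family of Calderón–Zygmund balls $\{B_i(\lambda_n)\}_i$ for $f$ at level $\lambda_n$ relative to $B_0$ (i.e., pairwise disjoint balls centered in $B_0$ with $5B_i\subset 11B_0$, $f\le\lambda_n$ a.e. on $B_0\setminus\bigcup_i 5B_i$, $\lambda_n<\fint_{B_i}f\,d\mu\le c_\mu^3\lambda_n$, and $c_\mu^{-3}\lambda_n<\fint_{5B_i}f\,d\mu\le\lambda_n$), such that moreover for each $n<N$, every ball $B_i(\lambda_{n+1})$ is contained in $5B_j(\lambda_n)$ for some $j$. -/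
open MeasureTheory Metric Set ENNReal

open Filter Topology

/-- Enumerate a countable set by a subset of `ℕ`. -/
lemma czaux_enum {α : Type*} (u : Set α) (hu : u.Countable) (d : α) :
    ∃ (S : Set ℕ) (c : ℕ → α), Set.BijOn c S u := by
  classical
  rcases u.eq_empty_or_nonempty with h | h
  · exact ⟨∅, fun _ => d, by simp [h]⟩
  · obtain ⟨g, rfl⟩ := hu.exists_eq_range h
    refine ⟨{i | ∀ j < i, g j ≠ g i}, g, fun i _ => mem_range_self i, ?_, ?_⟩
    · intro i hi j hj hij
      by_contra hne
      rcases lt_or_gt_of_ne hne with h' | h'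
      · exact hj i h' hij
      · exact hi j h' hij.symm
    · rintro y ⟨i, rfl⟩
      have hex : ∃ j, g j = g i := ⟨i, rfl⟩
      refine ⟨Nat.find hex, ?_, Nat.find_spec hex⟩
      intro j hj hgj
      exact Nat.find_min hex hj (hgj.trans (Nat.find_spec hex))

/-- Iterated doubling. -/
lemma czaux_doub_pow {X : Type*} [MetricSpace X] [MeasurableSpace X]
    {μ : Measure X} {cμ : ℝ} (hcμ : 1 ≤ cμ) (hdoub : IsDoubling μ cμ) (x : X) {r : ℝ}
    (hr : 0 < r) (k : ℕ) :
    μ (Metric.ball x (2 ^ k * r)) ≤ ENNReal.ofReal (cμ ^ k) * μ (Metric.ball x r) := by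
  induction k with
  | zero => simp
  | succ n ih =>
      have h2 : (2:ℝ) ^ (n+1) * r = 2 * (2 ^ n * r) := by ring
      rw [h2]
      calc μ (Metric.ball x (2 * (2 ^ n * r)))
          ≤ ENNReal.ofReal cμ * μ (Metric.ball x (2 ^ n * r)) :=
            hdoub.2 x _ (by positivity)
        _ ≤ ENNReal.ofReal cμ * (ENNReal.ofReal (cμ ^ n) * μ (Metric.ball x r)) :=
            mul_le_mul_right ih _
        _ = ENNReal.ofReal (cμ ^ (n+1)) * μ (Metric.ball x r) := by
            rw [← mul_assoc, ← ENNReal.ofReal_mul (by linarith), ← pow_succ']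

/-- Doubling measures on metric spaces give second countable topology. -/
lemma czaux_secondCountable {X : Type*} [MetricSpace X] [MeasurableSpace X] [BorelSpace X]
    {μ : Measure X} {cμ : ℝ} (hdoub : IsDoubling μ cμ) :
    SecondCountableTopology X := by
  rcases isEmpty_or_nonempty X with hX | hX
  · exact Metric.secondCountable_of_almost_dense_set
      (fun ε hε => ⟨∅, countable_empty, fun x => (IsEmpty.false x).elim⟩)
  obtain ⟨x₀⟩ := hX
  apply Metric.secondCountable_of_almost_dense_set
  intro ε hε
  have key : ∀ n : ℕ, ∃ s : Set X, s.Countable ∧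
      ∀ x ∈ Metric.ball x₀ ((n:ℝ)+1), ∃ y ∈ s, dist x y ≤ ε := by
    intro n
    set Rn : ℝ := (n:ℝ) + 1 with hRn
    have hRn0 : 0 < Rn := by positivity
    have hch : ∀ c ⊆ {s : Set X | s ⊆ Metric.ball x₀ Rn ∧ s.Pairwise fun a b => ε ≤ dist a b},
        IsChain (· ⊆ ·) c → ∃ ub ∈ {s : Set X | s ⊆ Metric.ball x₀ Rn ∧
          s.Pairwise fun a b => ε ≤ dist a b}, ∀ s ∈ c, s ⊆ ub := by
      intro c hc hchain
      refine ⟨⋃₀ c, ⟨?_, ?_⟩, fun s hs => subset_sUnion_of_mem hs⟩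
      · exact sUnion_subset fun s hsc => (hc hsc).1
      · intro a ha b hb hab
        obtain ⟨s₁, hs₁, ha₁⟩ := ha
        obtain ⟨s₂, hs₂, hb₂⟩ := hb
        rcases hchain.total hs₁ hs₂ with h | h
        · exact (hc hs₂).2 (h ha₁) hb₂ hab
        · exact (hc hs₁).2 ha₁ (h hb₂) hab
    obtain ⟨s, hs⟩ := zorn_subset
      {s : Set X | s ⊆ Metric.ball x₀ Rn ∧ s.Pairwise fun a b => ε ≤ dist a b} hch
    obtain ⟨⟨hsub, hsep⟩, hmax⟩ := hs
    have hcnt : s.Countable := by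
      have hdisj : Pairwise (Function.onFun Disjoint fun i : ↥s => Metric.ball (i : X) (ε/2)) := by
        intro i j hij
        have : ε ≤ dist (i : X) (j : X) :=
          hsep i.2 j.2 (Subtype.coe_injective.ne hij)
        exact ball_disjoint_ball (by linarith)
      have hfin : μ (⋃ i : ↥s, Metric.ball (i : X) (ε/2)) ≠ ∞ := by
        refine ne_top_of_le_ne_top (hdoub.1 x₀ (Rn + ε/2) (by positivity)).2.ne
          (measure_mono (iUnion_subset fun i y hy => ?_))
        have hi := hsub i.2
        rw [mem_ball] at *
        have := dist_triangle y (i : X) x₀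
        linarith
      have hcnt' := MeasureTheory.Measure.countable_meas_pos_of_disjoint_of_meas_iUnion_ne_top μ
        (fun i => measurableSet_ball) hdisj hfin
      have huniv : {i : ↥s | 0 < μ (Metric.ball (i : X) (ε/2))} = univ :=
        eq_univ_of_forall fun i => (hdoub.1 _ _ (by linarith)).1
      rw [huniv, countable_univ_iff] at hcnt'
      exact countable_coe_iff.mp hcnt'
    refine ⟨s, hcnt, fun x hx => ?_⟩
    by_contra hcon
    push_neg at hcon
    have hxs : x ∉ s := fun hxs => by have := hcon x hxs; rw [dist_self] at this; linarith
    have : insert x s ⊆ s := by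
      apply hmax ⟨insert_subset hx hsub, ?_⟩ (subset_insert x s)
      refine hsep.insert fun b hb hxb => ?_
      have := hcon b hb
      constructor <;> [skip; rw [dist_comm]] <;> linarith
    exact hxs (this (mem_insert x s))
  choose s hs1 hs2 using key
  refine ⟨⋃ n, s n, countable_iUnion hs1, fun x => ?_⟩
  obtain ⟨n, hn⟩ := exists_nat_gt (dist x x₀)
  obtain ⟨y, hy, hxy⟩ := hs2 n x (by rw [mem_ball]; push_cast; linarith)
  exact ⟨y, mem_iUnion.2 ⟨n, hy⟩, hxy⟩

/-- From a closed-ball average above `lam`, get a slightly larger open-ball average above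
`lam`. -/
lemma czaux_open_avg {X : Type*} [MetricSpace X] [MeasurableSpace X] [BorelSpace X]
    {μ : Measure X} {f : X → ℝ} (hf0 : ∀ x, 0 ≤ f x)
    (hmeas : AEStronglyMeasurable f μ)
    (hloc : ∀ (x : X) (r : ℝ), IntegrableOn f (Metric.ball x r) μ)
    (hpos : ∀ (x : X) (r : ℝ), 0 < r → 0 < μ (Metric.ball x r))
    (hfin : ∀ (x : X) (r : ℝ), μ (Metric.ball x r) ≠ ∞)
    {x : X} {d lam R' : ℝ} (hd : 0 < d) (hdR : d < R')
    (h : lam < ⨍ y in Metric.closedBall x d, f y ∂μ) :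
    ∃ r, d < r ∧ r < R' ∧ lam < ⨍ y in Metric.ball x r, f y ∂μ := by
  set ε := R' - d with hε
  have hε0 : 0 < ε := by simp only [hε]; linarith
  set s : ℕ → Set X := fun j => Metric.ball x (d + ε / (j+1)) with hs
  have hrad : ∀ j : ℕ, 0 < ε / ((j:ℝ)+1) := fun j => by positivity
  have hradle : ∀ j : ℕ, ε / ((j:ℝ)+1) ≤ ε := fun j => by
    rw [div_le_iff₀ (by positivity)]
    nlinarith [hε0, (Nat.cast_nonneg j : (0:ℝ) ≤ j)]
  have hsub' : ∀ j, s j ⊆ Metric.ball x R' := by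
    intro j y hy
    rw [mem_ball] at *
    have := hradle j
    simp only [hε] at this ⊢
    linarith
  have hanti : Antitone s := by
    intro i j hij
    apply ball_subset_ball
    have h1 : (i:ℝ)+1 ≤ (j:ℝ)+1 := by exact_mod_cast by omega
    have := hrad j
    gcongr
  have hcbs : ∀ j, Metric.closedBall x d ⊆ s j := fun j y hy =>
    mem_ball.2 (lt_of_le_of_lt (mem_closedBall.1 hy) (by linarith [hrad j]))
  have hInter : ⋂ j, s j = Metric.closedBall x d := by
    apply Subset.antisymm
    · intro y hy
      rw [mem_closedBall]
      have hall : ∀ j : ℕ, dist y x < d + ε / (j+1) := fun j => mem_ball.1 (mem_iInter.1 hy j)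
      by_contra hcon
      push_neg at hcon
      obtain ⟨j, hj⟩ := exists_nat_gt (ε / (dist y x - d))
      have hd1 : 0 < dist y x - d := by linarith
      have h2 : ε / ((j:ℝ)+1) < dist y x - d := by
        rw [div_lt_iff₀ (by positivity)]
        rw [div_lt_iff₀ hd1] at hj
        nlinarith [hd1]
      linarith [hall j]
    · exact fun y hy => mem_iInter.2 fun j => hcbs j hy
  have hμcb_ne : μ (Metric.closedBall x d) ≠ ∞ :=
    ne_top_of_le_ne_top (hfin x R') (measure_mono (Metric.closedBall_subset_ball hdR))
  have hμt : Tendsto (fun j => μ (s j)) atTop (𝓝 (μ (Metric.closedBall x d))) := by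
    have := tendsto_measure_iInter_atTop (μ := μ) (s := s)
      (fun j => measurableSet_ball.nullMeasurableSet) hanti ⟨0, hfin x _⟩
    rwa [hInter] at this
  have hμtR : Tendsto (fun j => (μ (s j)).toReal) atTop
      (𝓝 ((μ (Metric.closedBall x d)).toReal)) :=
    (ENNReal.tendsto_toReal hμcb_ne).comp hμt
  have hIt : Tendsto (fun j => ∫ y in s j, f y ∂μ) atTop
      (𝓝 (∫ y in Metric.closedBall x d, f y ∂μ)) := by
    have heq : ∀ j, ∫ y in s j, f y ∂μ = ∫ y, (s j).indicator f y ∂μ := fun j =>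
      (integral_indicator measurableSet_ball).symm
    have heq2 : ∫ y in Metric.closedBall x d, f y ∂μ
        = ∫ y, (Metric.closedBall x d).indicator f y ∂μ :=
      (integral_indicator measurableSet_closedBall).symm
    simp_rw [heq, heq2]
    apply tendsto_integral_of_dominated_convergence ((Metric.ball x R').indicator f)
    · exact fun j => hmeas.indicator measurableSet_ball
    · exact (hloc x R').integrable_indicator measurableSet_ball
    · intro j
      filter_upwards with y
      rw [Real.norm_eq_abs, abs_of_nonneg (indicator_nonneg (fun z _ => hf0 z) y)]
      by_cases hy : y ∈ s j
      · rw [indicator_of_mem hy, indicator_of_mem (hsub' j hy)]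
      · rw [indicator_of_notMem hy]
        exact indicator_nonneg (fun z _ => hf0 z) y
    · filter_upwards with y
      by_cases hy : y ∈ Metric.closedBall x d
      · have hmem : ∀ j, y ∈ s j := fun j => hcbs j hy
        simp only [indicator_of_mem hy, indicator_of_mem (hmem _)]
        exact tendsto_const_nhds
      · rw [indicator_of_notMem hy]
        have hgt : d < dist y x := lt_of_not_ge fun hc => hy (mem_closedBall.2 hc)
        obtain ⟨J, hJ⟩ := exists_nat_gt (ε / (dist y x - d))
        apply Tendsto.congr' (f₁ := fun _ => (0:ℝ)) ?_ tendsto_const_nhds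
        filter_upwards [eventually_ge_atTop J] with j hj
        rw [eq_comm, indicator_apply_eq_zero]
        intro hyj
        exfalso
        have hd1 : 0 < dist y x - d := by linarith
        have h2 : ε / ((j:ℝ)+1) ≤ dist y x - d := by
          rw [div_le_iff₀ (by positivity)]
          rw [div_lt_iff₀ hd1] at hJ
          have : (J:ℝ) ≤ (j:ℝ) := by exact_mod_cast hj
          nlinarith [hd1]
        have := mem_ball.1 hyj
        linarith
  have hcbpos : 0 < (μ (Metric.closedBall x d)).toReal :=
    ENNReal.toReal_pos
      (lt_of_lt_of_le (hpos x d hd) (measure_mono Metric.ball_subset_closedBall)).ne'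
      hμcb_ne
  have havg : Tendsto (fun j => ⨍ y in s j, f y ∂μ) atTop
      (𝓝 (⨍ y in Metric.closedBall x d, f y ∂μ)) := by
    simp_rw [setAverage_eq, smul_eq_mul]
    exact (hμtR.inv₀ hcbpos.ne').mul hIt
  obtain ⟨j, hj1, hj2⟩ := (((tendsto_order.1 havg).1 lam h).and (eventually_ge_atTop 1)).exists
  refine ⟨d + ε / (j+1), by linarith [hrad j], ?_, hj1⟩
  have h2j : (2:ℝ) ≤ (j:ℝ) + 1 := by exact_mod_cast by omega
  have : ε / ((j:ℝ)+1) ≤ ε/2 := by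
    apply div_le_div_of_nonneg_left hε0.le (by norm_num) h2j
  simp only [hε] at this ⊢
  linarith


/-- Iterated Calderón–Zygmund decomposition: given levels
`μ(B₀)⁻¹ ∫_{11B₀} f dμ ≤ λ 0 ≤ λ 1 ≤ ⋯ ≤ λ N`, for each `n ≤ N` there is a family of
Calderón–Zygmund balls for `f` at level `λ n` relative to `B₀`, chosen so that each
ball of the family at level `λ (n+1)` is contained in the `5`-dilate of some ball of
the family at level `λ n`. -/
theorem calderon_zygmund_decomposition_iterated {X : Type*} [MetricSpace X]
    [MeasurableSpace X] [BorelSpace X]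
    (μ : Measure X) (cμ : ℝ) (hcμ : 1 ≤ cμ) (hdoub : IsDoubling μ cμ)
    (f : X → ℝ) (hf0 : ∀ x, 0 ≤ f x)
    (hloc : ∀ (x : X) (r : ℝ), IntegrableOn f (Metric.ball x r) μ)
    (x₀ : X) (R : ℝ) (hR : 0 < R) (N : ℕ) (lam : ℕ → ℝ)
    (hlam0 : (μ (Metric.ball x₀ R)).toReal⁻¹ *
        ∫ x in Metric.ball x₀ (11 * R), f x ∂μ ≤ lam 0)
    (hmono : ∀ n, n < N → lam n ≤ lam (n + 1)) :
    ∃ (S : ℕ → Set ℕ) (c : ℕ → ℕ → X) (r : ℕ → ℕ → ℝ),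
      (∀ n, n ≤ N → IsCZBalls μ cμ f x₀ R (lam n) (S n) (c n) (r n)) ∧
      (∀ n, n < N → ∀ i ∈ S (n + 1), ∃ j ∈ S n,
        Metric.ball (c (n + 1) i) (r (n + 1) i) ⊆ Metric.ball (c n j) (5 * r n j)) := by
  classical
  -- basic measure facts
  have hcμ0 : 0 < cμ := lt_of_lt_of_le one_pos hcμ
  have hpos : ∀ (x : X) (r : ℝ), 0 < r → 0 < μ (Metric.ball x r) :=
    fun x r hr => (hdoub.1 x r hr).1
  have hfin : ∀ (x : X) (r : ℝ), μ (Metric.ball x r) ≠ ∞ := by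
    intro x r
    rcases le_or_gt r 0 with h | h
    · simp [ball_eq_empty.2 h]
    · exact (hdoub.1 x r h).2.ne
  have hposR : ∀ (x : X) (r : ℝ), 0 < r → 0 < (μ (Metric.ball x r)).toReal :=
    fun x r hr => ENNReal.toReal_pos (hpos x r hr).ne' (hfin x r)
  -- instances
  haveI hsc : SecondCountableTopology X := czaux_secondCountable hdoub
  haveI hlfm : IsLocallyFiniteMeasure μ :=
    ⟨fun x => ⟨Metric.ball x 1, Metric.ball_mem_nhds x one_pos, (hdoub.1 x 1 one_pos).2⟩⟩
  have hlocint : LocallyIntegrable f μ :=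
    fun x => ⟨Metric.ball x 1, Metric.ball_mem_nhds x one_pos, hloc x 1⟩
  haveI huld : IsUnifLocDoublingMeasure μ := by
    refine ⟨⟨(cμ^2).toNNReal, ?_⟩⟩
    filter_upwards [self_mem_nhdsWithin] with ε hε
    have hε0 : (0:ℝ) < ε := hε
    intro x
    calc μ (Metric.closedBall x (2 * ε)) ≤ μ (Metric.ball x (2 * (2 * ε))) :=
          measure_mono (Metric.closedBall_subset_ball (by linarith))
      _ ≤ ENNReal.ofReal cμ * μ (Metric.ball x (2 * ε)) := hdoub.2 x _ (by linarith)
      _ ≤ ENNReal.ofReal cμ * (ENNReal.ofReal cμ * μ (Metric.ball x ε)) :=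
          mul_le_mul_right (hdoub.2 x ε hε0) _
      _ = ENNReal.ofReal (cμ^2) * μ (Metric.ball x ε) := by
          rw [← mul_assoc, ← ENNReal.ofReal_mul hcμ0.le, sq]
      _ ≤ (cμ^2).toNNReal * μ (Metric.closedBall x ε) :=
          mul_le_mul' le_rfl (measure_mono Metric.ball_subset_closedBall)
  -- integral facts
  have I0 : ∀ (y : X) (t : ℝ), 0 ≤ ∫ z in Metric.ball y t, f z ∂μ :=
    fun y t => setIntegral_nonneg measurableSet_ball fun z _ => hf0 z
  have I1 : ∀ (y : X) (t : ℝ) (y' : X) (t' : ℝ), Metric.ball y t ⊆ Metric.ball y' t' →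
      ∫ z in Metric.ball y t, f z ∂μ ≤ ∫ z in Metric.ball y' t', f z ∂μ :=
    fun y t y' t' hsub => setIntegral_mono_set (hloc y' t')
      (Filter.Eventually.of_forall fun z => hf0 z) (HasSubset.Subset.eventuallyLE hsub)
  have hint : ∀ (y : X) (t : ℝ), 0 < t → ∫ z in Metric.ball y t, f z ∂μ =
      (μ (Metric.ball y t)).toReal * ⨍ z in Metric.ball y t, f z ∂μ := by
    intro y t ht
    rw [setAverage_eq, measureReal_def, smul_eq_mul, ← mul_assoc, mul_inv_cancel₀ (hposR y t ht).ne', one_mul]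
  have h5μ : ∀ (x : X) (t : ℝ), 0 < t →
      (μ (Metric.ball x (5*t))).toReal ≤ cμ^3 * (μ (Metric.ball x t)).toReal := by
    intro x t ht
    have h1 : μ (Metric.ball x (5*t)) ≤ ENNReal.ofReal (cμ^3) * μ (Metric.ball x t) := by
      refine le_trans (measure_mono (ball_subset_ball ?_)) (czaux_doub_pow hcμ hdoub x ht 3)
      nlinarith
    calc (μ (Metric.ball x (5*t))).toReal
        ≤ (ENNReal.ofReal (cμ^3) * μ (Metric.ball x t)).toReal :=
          ENNReal.toReal_mono (ENNReal.mul_ne_top ENNReal.ofReal_ne_top (hfin x t)) h1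
      _ = cμ^3 * (μ (Metric.ball x t)).toReal := by
          rw [ENNReal.toReal_mul, ENNReal.toReal_ofReal (by positivity)]
  -- monotone levels
  have hlam_mono : ∀ m n, m ≤ n → n ≤ N → lam m ≤ lam n := by
    intro m n hmn hnN
    induction n with
    | zero => have : m = 0 := Nat.le_zero.1 hmn; simp [this]
    | succ k ih =>
        rcases Nat.lt_or_ge m (k+1) with h | h
        · exact le_trans (ih (by omega) (by omega)) (hmono k (by omega))
        · have : m = k+1 := by omega
          simp [this]
  have hlam_nonneg : ∀ n, n ≤ N → 0 ≤ lam n := by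
    intro n hn
    have h0 : 0 ≤ lam 0 :=
      le_trans (mul_nonneg (inv_nonneg.2 ENNReal.toReal_nonneg) (I0 x₀ (11*R))) hlam0
    exact le_trans h0 (hlam_mono 0 n (by omega) hn)
  -- baseline averages
  have baseline : ∀ x ∈ Metric.ball x₀ R, ∀ t : ℝ, 2*R ≤ t → t ≤ 10*R →
      (⨍ z in Metric.ball x t, f z ∂μ) ≤ lam 0 := by
    intro x hx t h1 h2
    have ht0 : 0 < t := by linarith
    have hxx₀ : dist x x₀ < R := mem_ball.1 hx
    have hsub1 : Metric.ball x t ⊆ Metric.ball x₀ (11*R) := by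
      intro y hy
      rw [mem_ball] at *
      have := dist_triangle y x x₀
      linarith
    have hsub2 : Metric.ball x₀ R ⊆ Metric.ball x t := by
      intro y hy
      rw [mem_ball] at *
      have h3 := dist_triangle y x₀ x
      have h4 : dist x₀ x = dist x x₀ := dist_comm x₀ x
      linarith
    rw [setAverage_eq, smul_eq_mul]
    have hμle : (μ (Metric.ball x₀ R)).toReal ≤ (μ (Metric.ball x t)).toReal :=
      ENNReal.toReal_mono (hfin x t) (measure_mono hsub2)
    calc (μ (Metric.ball x t)).toReal⁻¹ * ∫ z in Metric.ball x t, f z ∂μ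
        ≤ (μ (Metric.ball x₀ R)).toReal⁻¹ * ∫ z in Metric.ball x₀ (11*R), f z ∂μ := by
          apply mul_le_mul (inv_anti₀ (hposR x₀ R hR) hμle)
            (I1 x t x₀ (11*R) hsub1) (I0 x t) (inv_nonneg.2 ENNReal.toReal_nonneg)
      _ ≤ lam 0 := hlam0
  -- the sets E n
  let E : ℕ → Set X := fun n => {x | x ∈ Metric.ball x₀ R ∧
    ∃ t : ℝ, 0 < t ∧ t < 2*R ∧ lam n < ⨍ z in Metric.ball x t, f z ∂μ}
  have hE_anti : ∀ m n, m ≤ n → n ≤ N → E n ⊆ E m := by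
    intro m n hmn hnN x hx
    obtain ⟨hx1, t, ht1, ht2, ht3⟩ := hx
    exact ⟨hx1, t, ht1, ht2, lt_of_le_of_lt (hlam_mono m n hmn hnN) ht3⟩
  -- the greatest level a point belongs to
  let idx : X → ℕ := fun x => Nat.findGreatest (fun n => x ∈ E n) N
  have hidx_le : ∀ x : X, idx x ≤ N := fun x => Nat.findGreatest_le N
  have hidx_mem : ∀ n, n ≤ N → ∀ x ∈ E n, x ∈ E (idx x) := by
    intro n hn x hx
    exact Nat.findGreatest_spec (P := fun n => x ∈ E n) hn hx
  have hidx_ge : ∀ n, n ≤ N → ∀ x ∈ E n, n ≤ idx x := by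
    intro n hn x hx
    exact Nat.le_findGreatest (P := fun n => x ∈ E n) hn hx
  -- choose a starting radius for each point
  have hr0ex : ∃ r0 : X → ℝ, ∀ x : X,
      (∃ t : ℝ, 0 < t ∧ t < 2*R ∧ lam (idx x) < ⨍ z in Metric.ball x t, f z ∂μ) →
      0 < r0 x ∧ r0 x < 2*R ∧ lam (idx x) < ⨍ z in Metric.ball x (r0 x), f z ∂μ := by
    refine ⟨fun x => if h : ∃ t : ℝ, 0 < t ∧ t < 2*R ∧
        lam (idx x) < ⨍ z in Metric.ball x t, f z ∂μ then h.choose else 1, fun x hx => ?_⟩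
    dsimp only
    rw [dif_pos hx]
    exact hx.choose_spec
  obtain ⟨r0, hr0⟩ := hr0ex
  have hr0' : ∀ n, n ≤ N → ∀ x ∈ E n, 0 < r0 x ∧ r0 x < 2*R ∧
      lam n < ⨍ z in Metric.ball x (r0 x), f z ∂μ := by
    intro n hn x hx
    have hxi : x ∈ E (idx x) := hidx_mem n hn x hx
    obtain ⟨h1, h2, h3⟩ := hr0 x hxi.2
    exact ⟨h1, h2, lt_of_le_of_lt (hlam_mono n (idx x) (hidx_ge n hn x hx) (hidx_le x)) h3⟩
  -- the chain reaches a radius in [2R, 10R]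
  have hchain : ∀ n, n ≤ N → ∀ x ∈ E n, ∃ j : ℕ, 5^j * r0 x < 2*R ∧
      (⨍ z in Metric.ball x (5^(j+1) * r0 x), f z ∂μ) ≤ lam n := by
    intro n hn x hx
    obtain ⟨hr01, hr02, -⟩ := hr0' n hn x hx
    have hT : ∃ m : ℕ, 2*R ≤ 5^m * r0 x := by
      obtain ⟨m, hm⟩ := pow_unbounded_of_one_lt ((2*R)/(r0 x)) (by norm_num : (1:ℝ) < 5)
      refine ⟨m, ?_⟩
      rw [div_lt_iff₀ hr01] at hm
      linarith
    have hm'mem : 2*R ≤ 5^(Nat.find hT) * r0 x := Nat.find_spec hT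
    have hm'pos : Nat.find hT ≠ 0 := by
      intro h0
      rw [h0, pow_zero, one_mul] at hm'mem
      linarith
    obtain ⟨j, hj⟩ : ∃ j, Nat.find hT = j + 1 := ⟨Nat.find hT - 1, by omega⟩
    have hjlt : 5^j * r0 x < 2*R := by
      have := Nat.find_min hT (m := j) (by omega)
      push_neg at this
      exact this
    refine ⟨j, hjlt, ?_⟩
    have h10 : 5^(j+1) * r0 x ≤ 10*R := by
      have h5 : (5:ℝ)^(j+1) = 5 * 5^j := by rw [pow_succ]; ring
      rw [h5, mul_assoc]
      nlinarith
    have h2R : 2*R ≤ 5^(j+1) * r0 x := by rw [← hj]; exact hm'mem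
    exact le_trans (baseline x hx.1 _ h2R h10) (hlam_mono 0 n (by omega) hn)
  -- stopping radii
  have hstop : ∃ ρ : ℕ → X → ℝ,
      (∀ n, n ≤ N → ∀ x ∈ E n, 0 < ρ n x ∧ ρ n x < 2*R ∧
        (lam n < ⨍ z in Metric.ball x (ρ n x), f z ∂μ) ∧
        (⨍ z in Metric.ball x (5 * ρ n x), f z ∂μ) ≤ lam n) ∧
      (∀ m n, m ≤ n → n ≤ N → ∀ x ∈ E n, ρ n x ≤ ρ m x) := by
    refine ⟨fun n x => 5 ^ sInf {m : ℕ |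
        (⨍ z in Metric.ball x (5^(m+1) * r0 x), f z ∂μ) ≤ lam n} * r0 x, ?_, ?_⟩
    · intro n hn x hx
      dsimp only
      obtain ⟨hr01, hr02, hr03⟩ := hr0' n hn x hx
      obtain ⟨j, hj1, hj2⟩ := hchain n hn x hx
      set k := sInf {m : ℕ |
        (⨍ z in Metric.ball x (5^(m+1) * r0 x), f z ∂μ) ≤ lam n} with hk
      have hkle : k ≤ j := Nat.sInf_le hj2
      have hkmem' := Nat.sInf_mem (⟨j, hj2⟩ : Set.Nonempty {m : ℕ |
        (⨍ z in Metric.ball x (5^(m+1) * r0 x), f z ∂μ) ≤ lam n})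
      rw [Set.mem_setOf_eq] at hkmem'
      have hkmem : (⨍ z in Metric.ball x (5^(k+1) * r0 x), f z ∂μ) ≤ lam n := hkmem'
      have hnotmem : ∀ m, m < k →
          ¬ ((⨍ z in Metric.ball x (5^(m+1) * r0 x), f z ∂μ) ≤ lam n) := by
        intro m hm
        exact Nat.notMem_of_lt_sInf (hk ▸ hm)
      refine ⟨by positivity, ?_, ?_, ?_⟩
      · calc (5:ℝ)^k * r0 x ≤ 5^j * r0 x :=
            mul_le_mul_of_nonneg_right (pow_le_pow_right₀ (by norm_num) hkle) hr01.le
          _ < 2*R := hj1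
      · rcases Nat.eq_zero_or_pos k with h0 | hposk
        · rw [h0, pow_zero, one_mul]
          exact hr03
        · obtain ⟨k', hk'⟩ : ∃ k', k = k' + 1 := ⟨k - 1, by omega⟩
          have := hnotmem k' (by omega)
          push_neg at this
          rw [hk']
          exact this
      · have h5e : 5 * ((5:ℝ)^k * r0 x) = 5^(k+1) * r0 x := by rw [pow_succ]; ring
        rw [h5e]
        exact hkmem
    · intro m n hmn hnN x hx
      have hxm : x ∈ E m := hE_anti m n hmn hnN hx
      obtain ⟨jm, hjm1, hjm2⟩ := hchain m (le_trans hmn hnN) x hxm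
      have h1' := Nat.sInf_mem (⟨jm, hjm2⟩ : Set.Nonempty {m' : ℕ |
        (⨍ z in Metric.ball x (5^(m'+1) * r0 x), f z ∂μ) ≤ lam m})
      rw [Set.mem_setOf_eq] at h1'
      have h1 : (⨍ z in Metric.ball x (5^(sInf {m' : ℕ |
          (⨍ z in Metric.ball x (5^(m'+1) * r0 x), f z ∂μ) ≤ lam m} + 1) * r0 x), f z ∂μ)
          ≤ lam m := h1'
      have h2 : sInf {m' : ℕ | (⨍ z in Metric.ball x (5^(m'+1) * r0 x), f z ∂μ) ≤ lam n}
          ≤ sInf {m' : ℕ | (⨍ z in Metric.ball x (5^(m'+1) * r0 x), f z ∂μ) ≤ lam m} :=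
        Nat.sInf_le (le_trans h1 (hlam_mono m n hmn hnN))
      exact mul_le_mul_of_nonneg_right (pow_le_pow_right₀ (by norm_num) h2)
        (hr0' n hnN x hx).1.le
  obtain ⟨ρ, hρ, hρmono⟩ := hstop
  -- upper bound for the average on B
  have havg_up : ∀ n, n ≤ N → ∀ x ∈ E n,
      (⨍ z in Metric.ball x (ρ n x), f z ∂μ) ≤ cμ^3 * lam n := by
    intro n hn x hx
    obtain ⟨hρ1, hρ2, hρ3, hρ4⟩ := hρ n hn x hx
    have h5 : 0 < 5 * ρ n x := by linarith
    have m1 := hposR x (ρ n x) hρ1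
    have e1 : ∫ z in Metric.ball x (ρ n x), f z ∂μ ≤
        ∫ z in Metric.ball x (5 * ρ n x), f z ∂μ :=
      I1 _ _ _ _ (ball_subset_ball (by linarith))
    have e2 := hint x (5 * ρ n x) h5
    have e4 := h5μ x (ρ n x) hρ1
    have e5 := hlam_nonneg n hn
    have key : ∫ z in Metric.ball x (ρ n x), f z ∂μ ≤
        cμ^3 * (μ (Metric.ball x (ρ n x))).toReal * lam n := by
      calc ∫ z in Metric.ball x (ρ n x), f z ∂μ
          ≤ (μ (Metric.ball x (5 * ρ n x))).toReal *
            ⨍ z in Metric.ball x (5 * ρ n x), f z ∂μ := by rw [← e2]; exact e1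
        _ ≤ (μ (Metric.ball x (5 * ρ n x))).toReal * lam n :=
            mul_le_mul_of_nonneg_left hρ4 ENNReal.toReal_nonneg
        _ ≤ cμ^3 * (μ (Metric.ball x (ρ n x))).toReal * lam n :=
            mul_le_mul_of_nonneg_right e4 e5
    rw [setAverage_eq, smul_eq_mul]
    calc (μ (Metric.ball x (ρ n x))).toReal⁻¹ * ∫ z in Metric.ball x (ρ n x), f z ∂μ
        ≤ (μ (Metric.ball x (ρ n x))).toReal⁻¹ *
          (cμ^3 * (μ (Metric.ball x (ρ n x))).toReal * lam n) :=
          mul_le_mul_of_nonneg_left key (inv_nonneg.2 ENNReal.toReal_nonneg)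
      _ = cμ^3 * lam n := by field_simp
  -- lower bound for the average on 5B
  have havg_low : ∀ n, n ≤ N → ∀ x ∈ E n,
      lam n / cμ^3 < ⨍ z in Metric.ball x (5 * ρ n x), f z ∂μ := by
    intro n hn x hx
    obtain ⟨hρ1, hρ2, hρ3, hρ4⟩ := hρ n hn x hx
    have h5 : 0 < 5 * ρ n x := by linarith
    have m1 := hposR x (ρ n x) hρ1
    have m5 := hposR x (5 * ρ n x) h5
    have e1 : ∫ z in Metric.ball x (ρ n x), f z ∂μ ≤
        ∫ z in Metric.ball x (5 * ρ n x), f z ∂μ :=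
      I1 _ _ _ _ (ball_subset_ball (by linarith))
    have e2 := hint x (ρ n x) hρ1
    have e4 := h5μ x (ρ n x) hρ1
    have e5 := hlam_nonneg n hn
    have key : (μ (Metric.ball x (ρ n x))).toReal * lam n <
        ∫ z in Metric.ball x (5 * ρ n x), f z ∂μ := by
      calc (μ (Metric.ball x (ρ n x))).toReal * lam n
          < (μ (Metric.ball x (ρ n x))).toReal *
            ⨍ z in Metric.ball x (ρ n x), f z ∂μ := mul_lt_mul_of_pos_left hρ3 m1
        _ = ∫ z in Metric.ball x (ρ n x), f z ∂μ := e2.symm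
        _ ≤ _ := e1
    rw [setAverage_eq, smul_eq_mul]
    have hstep : (μ (Metric.ball x (5 * ρ n x))).toReal⁻¹ *
        ((μ (Metric.ball x (ρ n x))).toReal * lam n) <
        (μ (Metric.ball x (5 * ρ n x))).toReal⁻¹ *
        ∫ z in Metric.ball x (5 * ρ n x), f z ∂μ :=
      mul_lt_mul_of_pos_left key (inv_pos.2 m5)
    refine lt_of_le_of_lt ?_ hstep
    rw [div_le_iff₀ (by positivity : (0:ℝ) < cμ^3), inv_mul_eq_div, div_mul_eq_mul_div,
      le_div_iff₀ m5]
    nlinarith [mul_le_mul_of_nonneg_right e4 e5]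
  -- Vitali covering at each level
  have main : ∀ n : ℕ, ∃ u : Set X, u ⊆ E n ∧
      u.PairwiseDisjoint (fun x => Metric.ball x (ρ n x)) ∧ u.Countable ∧
      (n ≤ N → ∀ a ∈ E n, ∃ b ∈ u, Metric.ball a (ρ n a) ⊆ Metric.ball b (5 * ρ n b)) := by
    intro n
    by_cases hn : n ≤ N
    · obtain ⟨u, hut, hdisj, hcov⟩ := Vitali.exists_disjoint_subfamily_covering_enlargement
        (fun x => Metric.ball x (ρ n x)) (E n) (ρ n) 2 one_lt_two
        (fun a ha => (hρ n hn a ha).1.le) (2*R) (fun a ha => (hρ n hn a ha).2.1.le)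
        (fun a ha => ⟨a, mem_ball_self (hρ n hn a ha).1⟩)
      refine ⟨u, hut, hdisj, ?_, fun _ a ha => ?_⟩
      · have hdisj' : Pairwise (Function.onFun Disjoint fun i : ↥u => Metric.ball (i : X) (ρ n (i : X))) :=
          fun i j hij => hdisj i.2 j.2 (Subtype.coe_injective.ne hij)
        have hfin' : μ (⋃ i : ↥u, Metric.ball (i : X) (ρ n (i : X))) ≠ ∞ := by
          refine ne_top_of_le_ne_top (hfin x₀ (11*R))
            (measure_mono (iUnion_subset fun i y hy => ?_))
          have hiE := hut i.2
          have h1 : dist (i : X) x₀ < R := mem_ball.1 hiE.1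
          have h2 := (hρ n hn _ hiE).2.1
          rw [mem_ball] at hy ⊢
          have := dist_triangle y (i : X) x₀
          linarith
        have hcnt' := MeasureTheory.Measure.countable_meas_pos_of_disjoint_of_meas_iUnion_ne_top μ
          (fun i : ↥u => measurableSet_ball) hdisj' hfin'
        have huniv : {i : ↥u | 0 < μ (Metric.ball (i : X) (ρ n (i : X)))} = univ :=
          eq_univ_of_forall fun i => hpos _ _ (hρ n hn _ (hut i.2)).1
        rw [huniv, countable_univ_iff] at hcnt'
        exact countable_coe_iff.mp hcnt'
      · obtain ⟨b, hb, hnei, hle⟩ := hcov a ha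
        refine ⟨b, hb, fun y hy => ?_⟩
        obtain ⟨z, hz1, hz2⟩ := hnei
        rw [mem_ball] at hy hz2 ⊢
        have hza : dist a z < ρ n a := by rw [dist_comm]; exact mem_ball.1 hz1
        have h4 := dist_triangle4 y a z b
        have hρb : 0 < ρ n b := (hρ n hn b (hut hb)).1
        linarith
    · exact ⟨∅, empty_subset _, pairwiseDisjoint_empty, countable_empty,
        fun h => absurd h hn⟩
  choose u hu1 hu2 hu3 hu4 using main
  -- a.e. bound outside the balls
  have hmeasf : AEStronglyMeasurable f μ := hlocint.aestronglyMeasurable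
  have leb := IsUnifLocDoublingMeasure.ae_tendsto_average (μ := μ) hlocint 1
  have haes : ∀ n, n ≤ N → ∀ᵐ x ∂μ,
      x ∈ Metric.ball x₀ R \ (⋃ b ∈ u n, Metric.ball b (5 * ρ n b)) → f x ≤ lam n := by
    intro n hn
    filter_upwards [leb] with x hx hmem
    by_contra hgt
    push_neg at hgt
    obtain ⟨hxB, hxU⟩ := hmem
    have htend : Tendsto (fun d : ℝ => ⨍ y in Metric.closedBall x d, f y ∂μ)
        (𝓝[>] (0:ℝ)) (𝓝 (f x)) := by
      apply hx (fun _ : ℝ => x) (fun d => d) tendsto_id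
      filter_upwards [self_mem_nhdsWithin] with d hd
      have hd0 : (0:ℝ) < d := hd
      exact Metric.mem_closedBall_self (by linarith)
    have hev : ∀ᶠ d in 𝓝[>] (0:ℝ), lam n < ⨍ y in Metric.closedBall x d, f y ∂μ :=
      (tendsto_order.1 htend).1 (lam n) hgt
    have hevR : ∀ᶠ d in 𝓝[>] (0:ℝ), d < R :=
      eventually_nhdsWithin_of_eventually_nhds (Iio_mem_nhds hR)
    obtain ⟨d, hd1, hd2, hd3⟩ := (hev.and (hevR.and self_mem_nhdsWithin)).exists
    have hd0 : (0:ℝ) < d := hd3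
    obtain ⟨t, ht1, ht2, ht3⟩ := czaux_open_avg hf0 hmeasf hloc hpos hfin hd0
      (show d < 2*R by linarith) hd1
    have hxE : x ∈ E n := ⟨hxB, t, lt_trans hd0 ht1, ht2, ht3⟩
    obtain ⟨b, hb, hsub⟩ := hu4 n hn x hxE
    exact hxU (mem_biUnion hb (hsub (mem_ball_self (hρ n hn x hxE).1)))
  -- enumerate
  choose S c hbij using fun n => czaux_enum (u n) (hu3 n) x₀
  refine ⟨S, c, fun n i => ρ n (c n i), ?_, ?_⟩
  · intro n hn
    have hmap : ∀ i ∈ S n, c n i ∈ u n := fun i hi => (hbij n).mapsTo hi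
    have hmemE : ∀ i ∈ S n, c n i ∈ E n := fun i hi => hu1 n (hmap i hi)
    refine ⟨?_, ?_, ?_, ?_, ?_, ?_, ?_⟩
    · exact fun i hi => (hρ n hn _ (hmemE i hi)).1
    · exact fun i hi => (hmemE i hi).1
    · intro i hi y hy
      have h1 : dist (c n i) x₀ < R := mem_ball.1 (hmemE i hi).1
      have h2 := (hρ n hn _ (hmemE i hi)).2.1
      rw [mem_ball] at hy ⊢
      have := dist_triangle y (c n i) x₀
      linarith
    · intro i hi j hj hij
      have hne : c n i ≠ c n j := fun h => hij ((hbij n).injOn hi hj h)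
      exact hu2 n (hmap i hi) (hmap j hj) hne
    · have hUeq : (⋃ i ∈ S n, Metric.ball (c n i) (5 * ρ n (c n i))) =
          ⋃ b ∈ u n, Metric.ball b (5 * ρ n b) := by
        rw [← (hbij n).image_eq, biUnion_image]
      filter_upwards [haes n hn] with x hx hmem
      rw [hUeq] at hmem
      exact hx hmem
    · intro i hi
      exact ⟨(hρ n hn _ (hmemE i hi)).2.2.1, havg_up n hn _ (hmemE i hi)⟩
    · intro i hi
      exact ⟨havg_low n hn _ (hmemE i hi), (hρ n hn _ (hmemE i hi)).2.2.2⟩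
  · intro n hn i hi
    have hcu : c (n+1) i ∈ u (n+1) := (hbij (n+1)).mapsTo hi
    have hE1 : c (n+1) i ∈ E (n+1) := hu1 (n+1) hcu
    have hEn : c (n+1) i ∈ E n := hE_anti n (n+1) (by omega) hn hE1
    obtain ⟨b, hb, hsub⟩ := hu4 n (le_of_lt hn) _ hEn
    obtain ⟨j, hj, hcj⟩ := (hbij n).surjOn hb
    refine ⟨j, hj, fun y hy => ?_⟩
    have hmonoρ : ρ (n+1) (c (n+1) i) ≤ ρ n (c (n+1) i) :=
      hρmono n (n+1) (by omega) hn _ hE1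
    have hy' : y ∈ Metric.ball (c (n+1) i) (ρ n (c (n+1) i)) :=
      mem_ball.2 (lt_of_lt_of_le (mem_ball.1 hy) hmonoρ)
    have hsb := hsub hy'
    show y ∈ Metric.ball (c n j) (5 * ρ n (c n j))
    rw [hcj]
    exact hsb
end

section
/- Let $(X,d,\mu)$ be a doubling metric measure space with doubling constant $c_\mu$ and let $f\in\mathrm{BMO}(X)$. Then for every ball $B\subset X$ and every $\lambda>0$, $\mu(\{x\in B : |f(x)-f_B|>\lambda\}) \le c_1\,\mu(B)\,e^{-c_2\lambda/\|f\|_\sharp}$, where $c_1=4c_\mu^7$ and $c_2=(\log 2)/(2c_\mu^8)$ do not depend on $f$ and $\lambda$. -/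
open MeasureTheory Metric Set ENNReal

/-- The set of mean oscillations `⨍_B |f - f_B| dμ` of `f` over all balls `B ⊆ X`. -/
def oscSet {X : Type*} [MetricSpace X] [MeasurableSpace X]
    (μ : Measure X) (f : X → ℝ) : Set ℝ :=
  {t : ℝ | ∃ (x : X) (r : ℝ), 0 < r ∧
    t = ⨍ y in Metric.ball x r, |f y - ⨍ z in Metric.ball x r, f z ∂μ| ∂μ}

/-- The BMO seminorm `‖f‖_♯ = sup_B ⨍_B |f - f_B| dμ`. -/
noncomputable def bmoSeminorm {X : Type*} [MetricSpace X] [MeasurableSpace X]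
    (μ : Measure X) (f : X → ℝ) : ℝ :=
  sSup (oscSet μ f)

namespace JNProof

variable {X : Type*} [MetricSpace X] [MeasurableSpace X] [BorelSpace X]
  {μ : Measure X} {cμ : ℝ} {f : X → ℝ}

lemma meas_ball_scale (hdoub : IsDoubling μ cμ) (hcμ : 1 ≤ cμ) (x : X) {r r' : ℝ} (hr : 0 < r)
    (m : ℕ) (hr' : r' ≤ 2 ^ m * r) :
    μ (Metric.ball x r') ≤ ENNReal.ofReal (cμ ^ m) * μ (Metric.ball x r) := by
  have hc0 : 0 ≤ cμ := le_trans zero_le_one hcμ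
  induction m generalizing r' with
  | zero =>
      simp only [pow_zero, one_mul] at hr' ⊢
      calc μ (Metric.ball x r') ≤ μ (Metric.ball x r) := measure_mono (ball_subset_ball hr')
      _ = 1 * μ (Metric.ball x r) := (one_mul _).symm
      _ ≤ ENNReal.ofReal 1 * μ (Metric.ball x r) := by simp
  | succ m ih =>
      have h2m : (0:ℝ) < 2 ^ m * r := by positivity
      calc μ (Metric.ball x r')
          ≤ μ (Metric.ball x (2 * (2 ^ m * r))) := by
            refine measure_mono (ball_subset_ball ?_)
            calc r' ≤ 2 ^ (m+1) * r := hr'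
            _ = 2 * (2 ^ m * r) := by ring
        _ ≤ ENNReal.ofReal cμ * μ (Metric.ball x (2 ^ m * r)) := hdoub.2 x _ h2m
        _ ≤ ENNReal.ofReal cμ * (ENNReal.ofReal (cμ ^ m) * μ (Metric.ball x r)) := by
            gcongr
            exact ih le_rfl
        _ = ENNReal.ofReal (cμ ^ (m+1)) * μ (Metric.ball x r) := by
            rw [← mul_assoc, ← ENNReal.ofReal_mul hc0, pow_succ, mul_comm (cμ ^ m) cμ]

lemma osc_le_bmo (hbmo : BddAbove (oscSet μ f)) (x : X) {r : ℝ} (hr : 0 < r) :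
    ⨍ y in Metric.ball x r, |f y - ⨍ z in Metric.ball x r, f z ∂μ| ∂μ ≤ bmoSeminorm μ f :=
  le_csSup hbmo ⟨x, r, hr, rfl⟩

/-- `|⨍_s f| ≤ ⨍_s |f|`. -/
lemma abs_setAverage_le (s : Set X) :
    |⨍ y in s, f y ∂μ| ≤ ⨍ y in s, |f y| ∂μ := by
  rw [setAverage_eq, setAverage_eq]
  rw [smul_eq_mul, smul_eq_mul, abs_mul, abs_of_nonneg (inv_nonneg.2 measureReal_nonneg)]
  gcongr
  exact (norm_integral_le_integral_norm f).trans_eq (by simp [Real.norm_eq_abs])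

/-- average of `f - c` over a set of positive finite measure. -/
lemma setAverage_sub_const {s : Set X} (h0 : μ s ≠ 0) (htop : μ s ≠ ⊤)
    (hf : IntegrableOn f s μ) (c : ℝ) :
    ⨍ y in s, (f y - c) ∂μ = (⨍ y in s, f y ∂μ) - c := by
  rw [setAverage_eq, setAverage_eq, integral_sub hf (integrableOn_const htop)]
  rw [setIntegral_const, smul_eq_mul, smul_eq_mul, mul_sub]
  congr 1
  rw [← mul_assoc, inv_mul_cancel₀ (show μ.real s ≠ 0 from ENNReal.toReal_ne_zero.2 ⟨h0, htop⟩), one_mul]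

end JNProof

namespace JNProof

variable {X : Type*} [MetricSpace X] [MeasurableSpace X] [BorelSpace X]
  {μ : Measure X} {cμ : ℝ} {f : X → ℝ}

lemma setAverage_nonneg {g : X → ℝ} (hg : ∀ y, 0 ≤ g y) (s : Set X) :
    0 ≤ ⨍ y in s, g y ∂μ := by
  rw [setAverage_eq]
  exact smul_nonneg (inv_nonneg.2 ENNReal.toReal_nonneg) (integral_nonneg hg)

lemma avg_diff_le {s t : Set X} (ht : IntegrableOn f t μ) (hst : s ⊆ t) (h0 : μ s ≠ 0)
    (hstop : μ s ≠ ⊤) (httop : μ t ≠ ⊤) :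
    |(⨍ y in t, f y ∂μ) - ⨍ y in s, f y ∂μ| ≤
      (μ t).toReal / (μ s).toReal * ⨍ y in t, |f y - ⨍ z in t, f z ∂μ| ∂μ := by
  set c := ⨍ z in t, f z ∂μ with hc
  have hfs : IntegrableOn f s μ := ht.mono_set hst
  have h1 : (⨍ y in s, f y ∂μ) - c = ⨍ y in s, (f y - c) ∂μ :=
    (setAverage_sub_const h0 hstop hfs c).symm
  have habs : |(⨍ y in t, f y ∂μ) - ⨍ y in s, f y ∂μ| = |⨍ y in s, (f y - c) ∂μ| := by
    rw [← h1, abs_sub_comm]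
  rw [habs]
  have h2 : |⨍ y in s, (f y - c) ∂μ| ≤ ⨍ y in s, |f y - c| ∂μ := abs_setAverage_le s
  refine h2.trans ?_
  have ht0 : μ t ≠ 0 := fun h => h0 (measure_mono_null hst h)
  have hts : (μ t).toReal ≠ 0 := ENNReal.toReal_ne_zero.2 ⟨ht0, httop⟩
  have h3 : ∫ y in s, |f y - c| ∂μ ≤ ∫ y in t, |f y - c| ∂μ := by
    refine setIntegral_mono_set ((ht.sub (integrableOn_const httop)).abs) ?_
      (HasSubset.Subset.eventuallyLE hst)
    exact Filter.Eventually.of_forall fun y => abs_nonneg _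
  rw [setAverage_eq, setAverage_eq, smul_eq_mul, smul_eq_mul]
  simp only [Measure.real]
  have goal_eq : (μ t).toReal / (μ s).toReal * ((μ t).toReal⁻¹ * ∫ y in t, |f y - c| ∂μ)
      = (μ s).toReal⁻¹ * ∫ y in t, |f y - c| ∂μ := by
    rw [div_eq_mul_inv, show (μ t).toReal * (μ s).toReal⁻¹ * ((μ t).toReal⁻¹ * ∫ y in t, |f y - c| ∂μ)
      = ((μ t).toReal * (μ t).toReal⁻¹) * ((μ s).toReal⁻¹ * ∫ y in t, |f y - c| ∂μ) from by ring,
      mul_inv_cancel₀ hts, one_mul]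
  rw [goal_eq]
  gcongr

/-- Comparison of averages over a ball and a subset with comparable measure. -/
lemma avg_diff_ball_le (hdoub : IsDoubling μ cμ) (hbmo : BddAbove (oscSet μ f))
    (hloc : ∀ (x : X) (r : ℝ), IntegrableOn f (Metric.ball x r) μ)
    {s : Set X} {x : X} {r ρ : ℝ} (hr : 0 < r) (hst : s ⊆ Metric.ball x r)
    (h0 : μ s ≠ 0) (hρ : 0 ≤ ρ) (hμ : μ (Metric.ball x r) ≤ ENNReal.ofReal ρ * μ s) :
    |(⨍ y in Metric.ball x r, f y ∂μ) - ⨍ y in s, f y ∂μ| ≤ ρ * bmoSeminorm μ f := by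
  have httop : μ (Metric.ball x r) ≠ ⊤ := (hdoub.1 x r hr).2.ne
  have hstop : μ s ≠ ⊤ := (lt_of_le_of_lt (measure_mono hst) (hdoub.1 x r hr).2).ne
  have h1 := avg_diff_le (μ := μ) (f := f) (hloc x r) hst h0 hstop httop
  refine h1.trans ?_
  have hosc := osc_le_bmo (μ := μ) (f := f) hbmo x hr
  have hosc0 : 0 ≤ ⨍ y in Metric.ball x r, |f y - ⨍ z in Metric.ball x r, f z ∂μ| ∂μ :=
    setAverage_nonneg (fun y => abs_nonneg _) _
  have hratio : (μ (Metric.ball x r)).toReal / (μ s).toReal ≤ ρ := by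
    rw [div_le_iff₀ (ENNReal.toReal_pos h0 hstop)]
    calc (μ (Metric.ball x r)).toReal ≤ (ENNReal.ofReal ρ * μ s).toReal := by
          refine ENNReal.toReal_mono ?_ hμ
          exact ENNReal.mul_ne_top ENNReal.ofReal_ne_top hstop
      _ = ρ * (μ s).toReal := by rw [ENNReal.toReal_mul, ENNReal.toReal_ofReal hρ]
  calc (μ (Metric.ball x r)).toReal / (μ s).toReal *
        ⨍ y in Metric.ball x r, |f y - ⨍ z in Metric.ball x r, f z ∂μ| ∂μ
      ≤ ρ * ⨍ y in Metric.ball x r, |f y - ⨍ z in Metric.ball x r, f z ∂μ| ∂μ := by gcongr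
    _ ≤ ρ * bmoSeminorm μ f := by gcongr

lemma integral_abs_sub_le_ball (hdoub : IsDoubling μ cμ) (hbmo : BddAbove (oscSet μ f))
    (hloc : ∀ (x : X) (r : ℝ), IntegrableOn f (Metric.ball x r) μ)
    {x : X} {r : ℝ} (hr : 0 < r) (c : ℝ) :
    ∫ y in Metric.ball x r, |f y - c| ∂μ ≤
      (μ (Metric.ball x r)).toReal *
        (bmoSeminorm μ f + |(⨍ z in Metric.ball x r, f z ∂μ) - c|) := by
  set B := Metric.ball x r
  set a := ⨍ z in B, f z ∂μ
  have httop : μ B ≠ ⊤ := (hdoub.1 x r hr).2.ne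
  have hint1 : Integrable (fun y => |f y - a|) (μ.restrict B) :=
    ((hloc x r).sub (integrableOn_const httop)).abs
  have hint0 : Integrable (fun y => |f y - c|) (μ.restrict B) :=
    ((hloc x r).sub (integrableOn_const httop)).abs
  have hint2 : Integrable (fun _ : X => |a - c|) (μ.restrict B) :=
    integrableOn_const httop
  have h1 : ∫ y in B, |f y - c| ∂μ ≤ ∫ y in B, (|f y - a| + |a - c|) ∂μ := by
    refine integral_mono hint0 (hint1.add hint2) fun y => ?_
    calc |f y - c| = |(f y - a) + (a - c)| := by ring_nf
    _ ≤ |f y - a| + |a - c| := abs_add_le _ _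
  refine h1.trans ?_
  rw [integral_add hint1 hint2, integral_const, smul_eq_mul, mul_add]
  simp only [Measure.restrict_apply_univ, Measure.real]
  gcongr
  have h2 : ∫ y in B, |f y - a| ∂μ = (μ B).toReal * ⨍ y in B, |f y - a| ∂μ := by
    rw [setAverage_eq, smul_eq_mul, ← mul_assoc]
    simp only [Measure.real]
    rcases eq_or_ne (μ B) 0 with h | h
    · simp [h]
    · rw [mul_inv_cancel₀ (ENNReal.toReal_ne_zero.2 ⟨h, httop⟩), one_mul]
  rw [h2]
  have := osc_le_bmo (μ := μ) hbmo x hr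
  gcongr

lemma chebyshev_ball (hV : MeasurableSet (V : Set X)) (hμV : μ V ≠ ⊤)
    (hf : IntegrableOn f V μ) (c : ℝ) {a : ℝ} (ha : 0 < a) :
    μ {y ∈ V | a < |f y - c|} ≤ ENNReal.ofReal (a⁻¹ * ∫ y in V, |f y - c| ∂μ) := by
  have hg : IntegrableOn (fun y => |f y - c|) V μ :=
    ((hf.sub (integrableOn_const hμV)).abs)
  have h1 := mul_meas_ge_le_integral_of_nonneg
    (μ := μ.restrict V) (f := fun y => |f y - c|)
    (Filter.Eventually.of_forall fun y => abs_nonneg _) hg a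
  have hAfin : μ.restrict V {x | a ≤ |f x - c|} ≠ ⊤ := by
    rw [Measure.restrict_apply' hV]
    exact ((measure_mono inter_subset_right).trans_lt hμV.lt_top).ne
  have h2 : μ {y ∈ V | a < |f y - c|} ≤ μ.restrict V {x | a ≤ |f x - c|} := by
    rw [Measure.restrict_apply' hV]
    exact measure_mono fun y hy => ⟨le_of_lt hy.2, hy.1⟩
  calc μ {y ∈ V | a < |f y - c|} ≤ μ.restrict V {x | a ≤ |f x - c|} := h2
    _ = ENNReal.ofReal ((μ.restrict V {x | a ≤ |f x - c|}).toReal) :=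
        (ENNReal.ofReal_toReal hAfin).symm
    _ ≤ ENNReal.ofReal (a⁻¹ * ∫ y in V, |f y - c| ∂μ) := by
        refine ENNReal.ofReal_le_ofReal ?_
        rw [inv_mul_eq_div, le_div_iff₀ ha, mul_comm]
        exact h1

end JNProof

namespace JNProof

variable {X : Type*} [MetricSpace X] [MeasurableSpace X] [BorelSpace X]
  {μ : Measure X} {cμ : ℝ} {f : X → ℝ}

lemma totallyBounded_ball_of_doubling (hdoub : IsDoubling μ cμ) (hcμ : 1 ≤ cμ)
    (x₀ : X) {ν : ℝ} (hν : 0 < ν) : TotallyBounded (Metric.ball x₀ ν) := by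
  rw [Metric.totallyBounded_iff]
  by_contra hcon
  push_neg at hcon
  obtain ⟨ε, hε, hsep0⟩ := hcon
  have hsep : ∀ t : Set X, t.Finite → ∃ z ∈ Metric.ball x₀ ν, ∀ y ∈ t, ε ≤ dist z y := by
    intro t htf
    obtain ⟨z, hz, hz2⟩ := not_subset.1 (hsep0 t htf)
    refine ⟨z, hz, fun y hy => ?_⟩
    by_contra hlt
    exact hz2 (mem_biUnion hy (by simpa [Metric.mem_ball, dist_comm] using hlt))
  classical
  have hexists : ∃ u : ℕ → X, (∀ k, u k ∈ Metric.ball x₀ ν) ∧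
      ∀ i j, i < j → ε ≤ dist (u j) (u i) := by
    -- recursively construct an ε-separated sequence in the ball
    let F : ℕ → {s : Set X // s.Finite} := fun k =>
    Nat.rec ⟨∅, Set.finite_empty⟩
        (fun _ p => ⟨insert (Classical.choose (hsep p.1 p.2)) p.1, p.2.insert _⟩) k
    let u : ℕ → X := fun k => Classical.choose (hsep (F k).1 (F k).2)
    have hu_mem : ∀ k, u k ∈ Metric.ball x₀ ν := fun k =>
      (Classical.choose_spec (hsep (F k).1 (F k).2)).1
    have hu_sep : ∀ k, ∀ y ∈ (F k).1, ε ≤ dist (u k) y := fun k =>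
      (Classical.choose_spec (hsep (F k).1 (F k).2)).2
    have hF_succ : ∀ k, (F (k+1)).1 = insert (u k) (F k).1 := fun k => rfl
    have hF_mono : ∀ i j, i ≤ j → (F i).1 ⊆ (F j).1 := by
      intro i j hij
      induction j, hij using Nat.le_induction with
      | base => exact subset_rfl
      | succ j hij ih => rw [hF_succ]; exact ih.trans (subset_insert _ _)
    refine ⟨u, hu_mem, fun i j hij => ?_⟩
    refine hu_sep j (u i) ?_
    have : u i ∈ (F (i+1)).1 := by rw [hF_succ]; exact mem_insert _ _
    exact hF_mono (i+1) j hij this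
  obtain ⟨u, hu_mem, hu_dist⟩ := hexists
  -- disjoint balls of radius ε/2 with uniformly positive measure
  have hdisj : Pairwise (Function.onFun Disjoint fun k => Metric.ball (u k) (ε/2)) := by
    intro i j hij
    rcases Nat.lt_or_ge i j with h | h
    · refine Metric.ball_disjoint_ball ?_
      rw [dist_comm]
      linarith [hu_dist i j h]
    · have h' : j < i := lt_of_le_of_ne h (Ne.symm hij)
      refine (Metric.ball_disjoint_ball ?_).symm
      rw [dist_comm]
      linarith [hu_dist j i h']
  obtain ⟨m, hm⟩ := pow_unbounded_of_one_lt ((2*ν) / (ε/2)) (one_lt_two (α := ℝ))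
  have hmr : 2*ν ≤ 2 ^ m * (ε/2) := by
    rw [div_lt_iff₀ (by positivity)] at hm
    linarith
  have hlow : ∀ k, μ (Metric.ball x₀ ν) ≤ ENNReal.ofReal (cμ ^ m) * μ (Metric.ball (u k) (ε/2)) := by
    intro k
    calc μ (Metric.ball x₀ ν) ≤ μ (Metric.ball (u k) (2*ν)) := by
          refine measure_mono (fun z hz => ?_)
          have h1 : dist z x₀ < ν := hz
          have h2 : dist (u k) x₀ < ν := hu_mem k
          have : dist z (u k) < 2*ν := by
            calc dist z (u k) ≤ dist z x₀ + dist x₀ (u k) := dist_triangle _ _ _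
            _ < ν + ν := by rw [dist_comm x₀ (u k)]; exact add_lt_add h1 h2
            _ = 2*ν := by ring
          exact this
      _ ≤ ENNReal.ofReal (cμ ^ m) * μ (Metric.ball (u k) (ε/2)) :=
          meas_ball_scale hdoub hcμ (u k) (by positivity) m hmr
  set a : ℝ≥0∞ := (ENNReal.ofReal (cμ ^ m))⁻¹ * μ (Metric.ball x₀ ν) with ha
  have ha0 : a ≠ 0 := by
    refine mul_ne_zero ?_ (hdoub.1 x₀ ν hν).1.ne'
    simp
  have hlow' : ∀ k, a ≤ μ (Metric.ball (u k) (ε/2)) := by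
    intro k
    rw [ha, ← ENNReal.div_eq_inv_mul]
    rw [ENNReal.div_le_iff_le_mul (Or.inl (by simp; positivity))
      (Or.inl ENNReal.ofReal_ne_top)]
    rw [mul_comm]
    exact hlow k
  have htop : (∞ : ℝ≥0∞) ≤ μ (Metric.ball x₀ (ν + ε)) := by
    have h1 : (⋃ k, Metric.ball (u k) (ε/2)) ⊆ Metric.ball x₀ (ν + ε) := by
      refine iUnion_subset fun k z hz => ?_
      calc dist z x₀ ≤ dist z (u k) + dist (u k) x₀ := dist_triangle _ _ _
      _ < ε/2 + ν := add_lt_add hz (hu_mem k)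
      _ ≤ ν + ε := by linarith
    calc (∞ : ℝ≥0∞) = ∑' _ : ℕ, a := (ENNReal.tsum_const_eq_top_of_ne_zero ha0).symm
    _ ≤ ∑' k, μ (Metric.ball (u k) (ε/2)) := ENNReal.tsum_le_tsum hlow'
    _ = μ (⋃ k, Metric.ball (u k) (ε/2)) :=
        (measure_iUnion hdisj fun k => measurableSet_ball).symm
    _ ≤ μ (Metric.ball x₀ (ν + ε)) := measure_mono h1
  exact absurd (top_le_iff.1 htop) (hdoub.1 x₀ (ν+ε) (by positivity)).2.ne

lemma secondCountable_of_doubling (hdoub : IsDoubling μ cμ) (hcμ : 1 ≤ cμ) (x₀ : X) :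
    SecondCountableTopology X := by
  have hsepa : TopologicalSpace.SeparableSpace X := by
    refine (TopologicalSpace.isSeparable_univ_iff).1 ?_
    have : (univ : Set X) = ⋃ n : ℕ, Metric.ball x₀ (n+1) := by
      refine (eq_univ_iff_forall.mpr fun x => ?_).symm
      obtain ⟨n, hn⟩ := exists_nat_gt (dist x x₀)
      exact mem_iUnion.2 ⟨n, by simp only [Metric.mem_ball]; linarith⟩
    rw [this]
    exact TopologicalSpace.IsSeparable.iUnion fun n =>
      (totallyBounded_ball_of_doubling hdoub hcμ x₀ (by positivity)).isSeparable
  exact @UniformSpace.secondCountable_of_separable X _ _ hsepa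

end JNProof

namespace JNProof

variable {X : Type*} [MetricSpace X] [MeasurableSpace X] [BorelSpace X]
  {μ : Measure X} {cμ : ℝ} {f : X → ℝ}

lemma cB_ne_zero (hdoub : IsDoubling μ cμ) (x : X) {r : ℝ} (hr : 0 < r) :
    μ (Metric.closedBall x r) ≠ 0 :=
  (lt_of_lt_of_le (hdoub.1 x r hr).1 (measure_mono ball_subset_closedBall)).ne'

lemma cB_ne_top (hdoub : IsDoubling μ cμ) (x : X) (r : ℝ) :
    μ (Metric.closedBall x r) ≠ ⊤ :=
  ((measure_mono (closedBall_subset_ball (lt_of_le_of_lt (le_abs_self r) (lt_add_one _)))).trans_lt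
    (hdoub.1 x (|r|+1) (by positivity)).2).ne

lemma intOn_cB (hloc : ∀ (x : X) (r : ℝ), IntegrableOn f (Metric.ball x r) μ) (x : X) (r : ℝ) :
    IntegrableOn f (Metric.closedBall x r) μ :=
  (hloc x (|r|+1)).mono_set
    (closedBall_subset_ball (lt_of_le_of_lt (le_abs_self r) (lt_add_one _)))

lemma abs_avg_sub_le {s : Set X} (h0 : μ s ≠ 0) (htop : μ s ≠ ⊤)
    (hf : IntegrableOn f s μ) (c : ℝ) :
    |(⨍ y in s, f y ∂μ) - c| ≤ ⨍ y in s, |f y - c| ∂μ := by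
  rw [← setAverage_sub_const h0 htop hf c]
  exact abs_setAverage_le (f := fun y => f y - c) s

end JNProof

namespace JNProof

variable {X : Type*} [MetricSpace X] [MeasurableSpace X] [BorelSpace X]
  {μ : Measure X} {cμ : ℝ} {f : X → ℝ}

set_option maxHeartbeats 1000000 in
lemma jn_induction [SecondCountableTopology X] [IsUnifLocDoublingMeasure μ]
    [IsLocallyFiniteMeasure μ]
    (hdoub : IsDoubling μ cμ) (hcμ : 1 ≤ cμ) (hc2 : 2 ≤ cμ ^ 2)
    (hloc : ∀ (x : X) (r : ℝ), IntegrableOn f (Metric.ball x r) μ)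
    (hbmo : BddAbove (oscSet μ f)) (hK : 0 < bmoSeminorm μ f) :
    ∀ (n : ℕ) (x₀ : X) (R : ℝ), 0 < R →
      μ {y ∈ Metric.ball x₀ R |
          (n : ℝ) * (2 * cμ ^ 8 * bmoSeminorm μ f) < |f y - ⨍ z in Metric.ball x₀ R, f z ∂μ|}
        ≤ 2⁻¹ ^ n * μ (Metric.ball x₀ R) := by
  classical
  set K := bmoSeminorm μ f with hKdef
  set Δ := 2 * cμ ^ 8 * K with hΔdef
  set S := 2 * cμ ^ 4 * (1 + cμ ^ 2) * K with hSdef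
  have hc0 : (0:ℝ) < cμ := lt_of_lt_of_le one_pos hcμ
  have hSpos : 0 < S := by positivity
  have hΔpos : 0 < Δ := by positivity
  have hLS : cμ ^ 3 * (1 + cμ ^ 3) * K ≤ S := by nlinarith [pow_pos hc0 3, pow_pos hc0 4, hK]
  have hScμK : S + cμ * K ≤ Δ := by
    rw [hSdef, hΔdef]
    have h1 : cμ ^ 6 ≥ 2 * cμ ^ 4 := by nlinarith [pow_pos hc0 4]
    have h2 : cμ ^ 4 ≥ cμ := by nlinarith [pow_pos hc0 2]
    nlinarith [pow_pos hc0 6, pow_pos hc0 8, hK]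
  -- Lebesgue differentiation
  have hlocint : LocallyIntegrable f μ := fun x =>
    ⟨Metric.ball x 1, ball_mem_nhds x one_pos, hloc x 1⟩
  have hG : ∀ᵐ x ∂μ, Filter.Tendsto (fun r : ℝ => ⨍ y in Metric.closedBall x r, f y ∂μ)
      (nhdsWithin 0 (Set.Ioi 0)) (nhds (f x)) := by
    filter_upwards [IsUnifLocDoublingMeasure.ae_tendsto_average (μ := μ) hlocint 1] with x hx
    refine hx (ι := ℝ) (l := nhdsWithin (0:ℝ) (Set.Ioi 0)) (fun _ => x) id Filter.tendsto_id ?_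
    filter_upwards [self_mem_nhdsWithin] with r hr
    have hr' : (0:ℝ) < r := hr
    simpa using Metric.mem_closedBall_self (x := x) hr'.le
  set N := {x : X | ¬ Filter.Tendsto (fun r : ℝ => ⨍ y in Metric.closedBall x r, f y ∂μ)
      (nhdsWithin 0 (Set.Ioi 0)) (nhds (f x))} with hNdef
  have hμN : μ N = 0 := by rw [hNdef]; exact hG
  intro n
  induction n with
  | zero =>
      intro x₀ R hR
      rw [pow_zero, one_mul]
      exact measure_mono (sep_subset _ _)
  | succ n ih =>
      intro x₀ R hR
      push_cast
      have hμB := hdoub.1 x₀ R hR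
      set B := Metric.ball x₀ R with hBdef
      set c₀ := ⨍ z in B, f z ∂μ with hc₀def
      set E := {y ∈ B | ((n:ℝ) + 1) * Δ < |f y - c₀|} with hEdef
      have havg_cB : ∀ (x : X) (r : ℝ), 0 < r →
          |(⨍ y in Metric.closedBall x r, f y ∂μ) - c₀| ≤
            ⨍ y in Metric.closedBall x r, |f y - c₀| ∂μ := fun x r hr =>
        abs_avg_sub_le (cB_ne_zero hdoub x hr) (cB_ne_top hdoub x r) (intOn_cB hloc x r) c₀
      -- Step 1: stopping time radii
      have hstop : ∀ x ∈ E \ N, ∃ σ : ℝ, 0 < σ ∧ σ ≤ 2*R ∧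
          (S < ⨍ y in Metric.closedBall x σ, |f y - c₀| ∂μ) ∧
          ⨍ y in Metric.closedBall x (2*σ), |f y - c₀| ∂μ ≤ S := by
        intro x hx
        have hxB : x ∈ B := hx.1.1
        have hxT : ((n:ℝ) + 1) * Δ < |f x - c₀| := hx.1.2
        have hGx : Filter.Tendsto (fun r : ℝ => ⨍ y in Metric.closedBall x r, f y ∂μ)
            (nhdsWithin 0 (Set.Ioi 0)) (nhds (f x)) := by
          have := hx.2
          rw [hNdef] at this
          exact not_not.1 this
        have hST : S < |f x - c₀| := by
          have h1 : S < Δ := lt_of_lt_of_le (lt_add_of_pos_right S (by positivity)) hScμK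
          have h2 : Δ ≤ ((n:ℝ)+1) * Δ := le_mul_of_one_le_left hΔpos.le
            (by have : (0:ℝ) ≤ n := Nat.cast_nonneg n; linarith)
          linarith
        have h1 : ∀ᶠ r in nhdsWithin (0:ℝ) (Set.Ioi 0),
            S < |(⨍ y in Metric.closedBall x r, f y ∂μ) - c₀| :=
          ((hGx.sub_const c₀).abs).eventually (eventually_gt_nhds hST)
        have h2 : Set.Ioo (0:ℝ) R ∈ nhdsWithin (0:ℝ) (Set.Ioi 0) :=
          Ioo_mem_nhdsGT_of_mem ⟨le_refl 0, hR⟩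
        obtain ⟨r₁, hr₁S, hr₁mem⟩ := (h1.and (Filter.eventually_of_mem h2 (fun y hy => hy))).exists
        obtain ⟨hr₁0, hr₁R⟩ := hr₁mem
        have hsmall : S < ⨍ y in Metric.closedBall x r₁, |f y - c₀| ∂μ :=
          lt_of_lt_of_le hr₁S (havg_cB x r₁ hr₁0)
        -- big radii have small averages
        have hbig : ∀ m : ℕ, 2*R ≤ 2^(m+1)*r₁ → 2^(m+1)*r₁ < 4*R →
            ⨍ y in Metric.closedBall x (2^(m+1)*r₁), |f y - c₀| ∂μ ≤ S := by
          intro m hm1 hm2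
          set τ := (2:ℝ)^(m+1)*r₁ with hτdef
          have hτpos : 0 < τ := by positivity
          have hsub : Metric.closedBall x τ ⊆ Metric.ball x₀ (5*R) := by
            intro z hz
            have hzx : dist z x ≤ τ := hz
            have hxx₀ : dist x x₀ < R := hxB
            have htri : dist z x₀ ≤ dist z x + dist x x₀ := dist_triangle _ _ _
            show dist z x₀ < 5*R
            linarith
          have hBsub : B ⊆ Metric.closedBall x τ := by
            intro z hz
            have hzx₀ : dist z x₀ < R := hz
            have hxx₀ : dist x x₀ < R := hxB
            have htri : dist z x ≤ dist z x₀ + dist x₀ x := dist_triangle _ _ _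
            rw [dist_comm x₀ x] at htri
            show dist z x ≤ τ
            linarith
          have hμ5top : μ (Metric.ball x₀ (5*R)) ≠ ⊤ := (hdoub.1 x₀ (5*R) (by positivity)).2.ne
          have hint5 : ∫ y in Metric.closedBall x τ, |f y - c₀| ∂μ ≤
              ∫ y in Metric.ball x₀ (5*R), |f y - c₀| ∂μ := by
            refine setIntegral_mono_set
              (((hloc x₀ (5*R)).sub (integrableOn_const hμ5top)).abs)
              (Filter.Eventually.of_forall fun y => abs_nonneg _)
              (HasSubset.Subset.eventuallyLE hsub)
          have h5B := integral_abs_sub_le_ball hdoub hbmo hloc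
            (show (0:ℝ) < 5*R by positivity) (x := x₀) c₀
          have hscale5 : μ (Metric.ball x₀ (5*R)) ≤ ENNReal.ofReal (cμ^3) * μ B :=
            meas_ball_scale hdoub hcμ x₀ hR 3 (by norm_num; linarith)
          have hdiff5 : |(⨍ z in Metric.ball x₀ (5*R), f z ∂μ) - c₀| ≤ cμ^3 * K := by
            refine avg_diff_ball_le hdoub hbmo hloc (by positivity) ?_ hμB.1.ne'
              (by positivity) hscale5
            exact ball_subset_ball (by linarith)
          have h5μ : (μ (Metric.ball x₀ (5*R))).toReal ≤ cμ^3 * (μ B).toReal := by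
            calc (μ (Metric.ball x₀ (5*R))).toReal ≤ (ENNReal.ofReal (cμ^3) * μ B).toReal :=
                ENNReal.toReal_mono (ENNReal.mul_ne_top ENNReal.ofReal_ne_top hμB.2.ne) hscale5
            _ = cμ^3*(μ B).toReal := by
                rw [ENNReal.toReal_mul, ENNReal.toReal_ofReal (by positivity)]
          have hμBpos : 0 < (μ B).toReal := ENNReal.toReal_pos hμB.1.ne' hμB.2.ne
          have hμτpos : 0 < (μ (Metric.closedBall x τ)).toReal :=
            ENNReal.toReal_pos (cB_ne_zero hdoub x hτpos) (cB_ne_top hdoub x τ)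
          have hμτB : (μ B).toReal ≤ (μ (Metric.closedBall x τ)).toReal :=
            ENNReal.toReal_mono (cB_ne_top hdoub x τ) (measure_mono hBsub)
          have hnum : ∫ y in Metric.closedBall x τ, |f y - c₀| ∂μ ≤
              cμ^3*(μ B).toReal*(K + cμ^3*K) := by
            refine hint5.trans (h5B.trans ?_)
            have hKd : (0:ℝ) ≤ K + |(⨍ z in Metric.ball x₀ (5*R), f z ∂μ) - c₀| := by
              positivity
            calc (μ (Metric.ball x₀ (5*R))).toReal *
                  (K + |(⨍ z in Metric.ball x₀ (5*R), f z ∂μ) - c₀|)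
                ≤ (cμ^3*(μ B).toReal) * (K + cμ^3*K) := by
                  refine mul_le_mul h5μ (by linarith [hdiff5]) hKd (by positivity)
            _ = cμ^3*(μ B).toReal*(K + cμ^3*K) := by ring
          rw [setAverage_eq, smul_eq_mul]
          have hinv : (μ (Metric.closedBall x τ)).toReal⁻¹ ≤ (μ B).toReal⁻¹ :=
            inv_anti₀ hμBpos hμτB
          have hintnonneg : 0 ≤ ∫ y in Metric.closedBall x τ, |f y - c₀| ∂μ :=
            integral_nonneg fun y => abs_nonneg _
          calc (μ (Metric.closedBall x τ)).toReal⁻¹ * ∫ y in Metric.closedBall x τ, |f y - c₀| ∂μ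
              ≤ (μ B).toReal⁻¹ * (cμ^3*(μ B).toReal*(K + cμ^3*K)) := by
                refine mul_le_mul hinv hnum hintnonneg (by positivity)
          _ = cμ^3*(1+cμ^3)*K := by field_simp
          _ ≤ S := hLS
        -- minimal stopping exponent
        obtain ⟨m', hm'⟩ := pow_unbounded_of_one_lt ((2*R)/r₁) (one_lt_two (α := ℝ))
        have hPex : ∃ m : ℕ, 2*R ≤ 2^(m+1)*r₁ := by
          refine ⟨m', ?_⟩
          rw [div_lt_iff₀ hr₁0] at hm'
          have : (2:ℝ)^m' ≤ 2^(m'+1) := by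
            rw [pow_succ]
            nlinarith [pow_pos (two_pos (α := ℝ)) m']
          nlinarith [pow_pos (two_pos (α := ℝ)) m']
        set m₀ := Nat.find hPex with hm₀def
        have hm₀1 : 2*R ≤ 2^(m₀+1)*r₁ := Nat.find_spec hPex
        have hm₀2 : 2^(m₀+1)*r₁ < 4*R := by
          rcases Nat.eq_zero_or_pos m₀ with h0 | hpos
          · rw [h0]
            norm_num
            linarith
          · have hlt : m₀ - 1 < m₀ := Nat.sub_lt hpos one_pos
            have hnot := Nat.find_min hPex hlt
            rw [Nat.sub_add_cancel hpos] at hnot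
            push_neg at hnot
            have : (2:ℝ)^(m₀+1) = 2 * 2^m₀ := by rw [pow_succ]; ring
            nlinarith [hnot]
        have hQex : ∃ j : ℕ, ⨍ y in Metric.closedBall x (2^(j+1)*r₁), |f y - c₀| ∂μ ≤ S :=
          ⟨m₀, hbig m₀ hm₀1 hm₀2⟩
        set j₀ := Nat.find hQex with hj₀def
        have hj₀ : ⨍ y in Metric.closedBall x (2^(j₀+1)*r₁), |f y - c₀| ∂μ ≤ S :=
          Nat.find_spec hQex
        have hj₀le : j₀ ≤ m₀ := Nat.find_min' hQex (hbig m₀ hm₀1 hm₀2)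
        refine ⟨2^j₀ * r₁, by positivity, ?_, ?_, ?_⟩
        · have hp : (2:ℝ)^j₀ ≤ 2^m₀ := pow_le_pow_right₀ one_le_two hj₀le
          have : (2:ℝ)^(m₀+1) = 2 * 2^m₀ := by rw [pow_succ]; ring
          nlinarith [pow_pos (two_pos (α := ℝ)) m₀]
        · rcases Nat.eq_zero_or_pos j₀ with h0 | hpos
          · rw [h0]
            simpa using hsmall
          · have hlt : j₀ - 1 < j₀ := Nat.sub_lt hpos one_pos
            have hnot := Nat.find_min hQex hlt
            rw [Nat.sub_add_cancel hpos] at hnot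
            exact lt_of_not_ge hnot
        · have heq : 2*((2:ℝ)^j₀*r₁) = 2^(j₀+1)*r₁ := by rw [pow_succ]; ring
          rw [heq]
          exact hj₀
      choose! σf hσ1 hσ2 hσ3 hσ4 using hstop
      -- Step 2: Vitali covering
      obtain ⟨u, hu_sub, hu_disj, hu_cover⟩ :=
        Vitali.exists_disjoint_subfamily_covering_enlargement
          (fun a => Metric.closedBall a (σf a)) (E \ N) σf 2 one_lt_two
          (fun a ha => (hσ1 a ha).le) (2*R) (fun a ha => hσ2 a ha)
          (fun a ha => ⟨a, mem_closedBall_self (hσ1 a ha).le⟩)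
      have hcB_sub4 : ∀ b ∈ E \ N, Metric.closedBall b (σf b) ⊆ Metric.ball x₀ (4*R) := by
        intro b hb z hz
        have h1 : dist z b ≤ σf b := hz
        have h2 : σf b ≤ 2*R := hσ2 b hb
        have h3 : dist b x₀ < R := hb.1.1
        have htri : dist z x₀ ≤ dist z b + dist b x₀ := dist_triangle _ _ _
        show dist z x₀ < 4*R
        linarith
      have hμ4top : μ (Metric.ball x₀ (4*R)) ≠ ⊤ := (hdoub.1 x₀ (4*R) (by positivity)).2.ne
      have hu_cnt : u.Countable := by
        have hdisj' : Pairwise (Function.onFun Disjoint fun b : ↥u => Metric.closedBall (b:X) (σf b)) :=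
          fun i j hij => hu_disj i.2 j.2 (fun h => hij (Subtype.ext h))
        have htot : μ (⋃ b : ↥u, Metric.closedBall (b:X) (σf b)) ≠ ⊤ := by
          refine ((measure_mono (iUnion_subset fun b => hcB_sub4 _ (hu_sub b.2))).trans_lt
            hμ4top.lt_top).ne
        have h := MeasureTheory.Measure.countable_meas_pos_of_disjoint_of_meas_iUnion_ne_top μ
          (fun b : ↥u => measurableSet_closedBall) hdisj' htot
        have huniv : {i : ↥u | 0 < μ (Metric.closedBall (i:X) (σf i))} = univ := by
          refine eq_univ_of_forall fun i => ?_
          exact lt_of_lt_of_le (hdoub.1 (i:X) (σf i) (hσ1 _ (hu_sub i.2))).1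
            (measure_mono ball_subset_closedBall)
        rw [huniv] at h
        have : Countable ↥u := countable_univ_iff.1 h
        exact Set.countable_coe_iff.2 this
      haveI := hu_cnt.to_subtype
      -- Step 3: covering map into "bad" sets at level n
      have hEsub : E \ N ⊆ ⋃ b ∈ u,
          {y ∈ Metric.ball b (4 * σf b) | (n:ℝ) * Δ < |f y - ⨍ z in Metric.ball b (4 * σf b), f z ∂μ|} := by
        intro a ha
        obtain ⟨b, hbu, hnint, hab⟩ := hu_cover a ha
        have hbE := hu_sub hbu
        have hσb := hσ1 b hbE
        have haV : a ∈ Metric.ball b (4 * σf b) := by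
          obtain ⟨z, hz1, hz2⟩ := hnint
          have hd1 : dist z a ≤ σf a := hz1
          have hd2 : dist z b ≤ σf b := hz2
          have htri : dist a b ≤ dist a z + dist z b := dist_triangle _ _ _
          rw [dist_comm a z] at htri
          show dist a b < 4 * σf b
          linarith
        have hbcB0 : μ (Metric.closedBall b (2 * σf b)) ≠ 0 := cB_ne_zero hdoub b (by linarith)
        have t1 : |(⨍ z in Metric.ball b (4 * σf b), f z ∂μ) -
            ⨍ z in Metric.closedBall b (2 * σf b), f z ∂μ| ≤ cμ * K := by
          refine avg_diff_ball_le hdoub hbmo hloc (by positivity) ?_ hbcB0 hc0.le ?_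
          · exact closedBall_subset_ball (by linarith)
          · calc μ (Metric.ball b (4 * σf b))
                ≤ ENNReal.ofReal (cμ^1) * μ (Metric.ball b (2 * σf b)) :=
                  meas_ball_scale hdoub hcμ b (by linarith) 1 (by nlinarith)
            _ ≤ ENNReal.ofReal cμ * μ (Metric.closedBall b (2 * σf b)) := by
                rw [pow_one]
                exact mul_le_mul_right (measure_mono ball_subset_closedBall) _
        have t2 : |(⨍ z in Metric.closedBall b (2 * σf b), f z ∂μ) - c₀| ≤ S :=
          le_trans (abs_avg_sub_le hbcB0 (cB_ne_top hdoub b _) (intOn_cB hloc b _) c₀)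
            (hσ4 b hbE)
        have hbound : |(⨍ z in Metric.ball b (4 * σf b), f z ∂μ) - c₀| ≤ S + cμ*K := by
          calc |(⨍ z in Metric.ball b (4 * σf b), f z ∂μ) - c₀|
              ≤ |(⨍ z in Metric.ball b (4 * σf b), f z ∂μ) -
                  ⨍ z in Metric.closedBall b (2 * σf b), f z ∂μ| +
                |(⨍ z in Metric.closedBall b (2 * σf b), f z ∂μ) - c₀| := by
                  have := abs_sub_le (⨍ z in Metric.ball b (4 * σf b), f z ∂μ)
                    (⨍ z in Metric.closedBall b (2 * σf b), f z ∂μ) c₀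
                  linarith
          _ ≤ cμ*K + S := add_le_add t1 t2
          _ = S + cμ*K := by ring
        have haE : ((n:ℝ) + 1)*Δ < |f a - c₀| := ha.1.2
        refine mem_biUnion hbu ⟨haV, ?_⟩
        have h3 : |f a - c₀| ≤ |f a - ⨍ z in Metric.ball b (4 * σf b), f z ∂μ| +
            |(⨍ z in Metric.ball b (4 * σf b), f z ∂μ) - c₀| := by
          have h4 : f a - c₀ = (f a - ⨍ z in Metric.ball b (4 * σf b), f z ∂μ) +
              ((⨍ z in Metric.ball b (4 * σf b), f z ∂μ) - c₀) := by ring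
          rw [h4]
          exact abs_add_le _ _
        have hexpand : ((n:ℝ) + 1)*Δ = (n:ℝ)*Δ + Δ := by ring
        linarith
      -- Step 4: measure estimates
      have hEμ : μ E ≤ μ (⋃ b ∈ u,
          {y ∈ Metric.ball b (4 * σf b) | (n:ℝ) * Δ < |f y - ⨍ z in Metric.ball b (4 * σf b), f z ∂μ|}) := by
        calc μ E ≤ μ ((E \ N) ∪ N) := measure_mono (fun y hy => by
              by_cases h : y ∈ N
              · exact Or.inr h
              · exact Or.inl ⟨hy, h⟩)
        _ ≤ μ (E \ N) + μ N := measure_union_le _ _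
        _ = μ (E \ N) := by rw [hμN, add_zero]
        _ ≤ _ := measure_mono hEsub
      have hbadμ : ∀ b : ↥u,
          μ {y ∈ Metric.ball (b:X) (4 * σf b) |
              (n:ℝ) * Δ < |f y - ⨍ z in Metric.ball (b:X) (4 * σf b), f z ∂μ|}
            ≤ 2⁻¹ ^ n * μ (Metric.ball (b:X) (4 * σf b)) :=
        fun b => ih (b:X) (4 * σf b) (by linarith [hσ1 _ (hu_sub b.2)])
      have hsum1 : ∑' b : ↥u, μ (Metric.ball (b:X) (4 * σf b)) ≤
          ENNReal.ofReal (cμ^2) * ∑' b : ↥u, μ (Metric.closedBall (b:X) (σf b)) := by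
        rw [← ENNReal.tsum_mul_left]
        refine ENNReal.tsum_le_tsum fun b => ?_
        have hσb := hσ1 _ (hu_sub b.2)
        calc μ (Metric.ball (b:X) (4 * σf b))
            ≤ ENNReal.ofReal (cμ^2) * μ (Metric.ball (b:X) (σf b)) :=
              meas_ball_scale hdoub hcμ (b:X) hσb 2 (by nlinarith)
        _ ≤ ENNReal.ofReal (cμ^2) * μ (Metric.closedBall (b:X) (σf b)) :=
              mul_le_mul_right (measure_mono ball_subset_closedBall) _
      have hint4B : IntegrableOn (fun y => |f y - c₀|) (Metric.ball x₀ (4*R)) μ :=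
        ((hloc x₀ (4*R)).sub (integrableOn_const hμ4top)).abs
      have hcheb : ∀ b : ↥u, μ (Metric.closedBall (b:X) (σf b)) ≤
          ENNReal.ofReal (S⁻¹ * ∫ y in Metric.closedBall (b:X) (σf b), |f y - c₀| ∂μ) := by
        intro b
        have hbE := hu_sub b.2
        have hpos := hσ1 _ hbE
        have h3 := hσ3 _ hbE
        have hμpos : 0 < (μ (Metric.closedBall (b:X) (σf b))).toReal :=
          ENNReal.toReal_pos (cB_ne_zero hdoub _ hpos) (cB_ne_top hdoub _ _)
        rw [setAverage_eq, smul_eq_mul] at h3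
        have h5 : S * (μ (Metric.closedBall (b:X) (σf b))).toReal <
            ∫ y in Metric.closedBall (b:X) (σf b), |f y - c₀| ∂μ := by
          calc S * (μ (Metric.closedBall (b:X) (σf b))).toReal
              < ((μ (Metric.closedBall (b:X) (σf b))).toReal⁻¹ *
                  ∫ y in Metric.closedBall (b:X) (σf b), |f y - c₀| ∂μ) *
                (μ (Metric.closedBall (b:X) (σf b))).toReal := mul_lt_mul_of_pos_right h3 hμpos
          _ = ∫ y in Metric.closedBall (b:X) (σf b), |f y - c₀| ∂μ := by
              rw [mul_comm, ← mul_assoc, mul_inv_cancel₀ hμpos.ne', one_mul]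
        have h4 : (μ (Metric.closedBall (b:X) (σf b))).toReal ≤
            S⁻¹ * ∫ y in Metric.closedBall (b:X) (σf b), |f y - c₀| ∂μ := by
          rw [inv_mul_eq_div, le_div_iff₀ hSpos, mul_comm]
          exact h5.le
        calc μ (Metric.closedBall (b:X) (σf b))
            = ENNReal.ofReal ((μ (Metric.closedBall (b:X) (σf b))).toReal) :=
              (ENNReal.ofReal_toReal (cB_ne_top hdoub _ _)).symm
        _ ≤ _ := ENNReal.ofReal_le_ofReal h4
      have hdisj' : Pairwise (Function.onFun Disjoint fun b : ↥u => Metric.closedBall (b:X) (σf b)) :=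
        fun i j hij => hu_disj i.2 j.2 (fun h => hij (Subtype.ext h))
      have hsumI : HasSum (fun b : ↥u => ∫ y in Metric.closedBall (b:X) (σf b), |f y - c₀| ∂μ)
          (∫ y in ⋃ b : ↥u, Metric.closedBall (b:X) (σf b), |f y - c₀| ∂μ) :=
        hasSum_integral_iUnion (fun b => measurableSet_closedBall) hdisj'
          (hint4B.mono_set (iUnion_subset fun b => hcB_sub4 _ (hu_sub b.2)))
      have hIsum_le : ∑' b : ↥u, ∫ y in Metric.closedBall (b:X) (σf b), |f y - c₀| ∂μ ≤
          ∫ y in Metric.ball x₀ (4*R), |f y - c₀| ∂μ := by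
        rw [hsumI.tsum_eq]
        refine setIntegral_mono_set hint4B (Filter.Eventually.of_forall fun y => abs_nonneg _)
          (HasSubset.Subset.eventuallyLE (iUnion_subset fun b => hcB_sub4 _ (hu_sub b.2)))
      have hterm_nonneg : ∀ b : ↥u, 0 ≤ ∫ y in Metric.closedBall (b:X) (σf b), |f y - c₀| ∂μ :=
        fun b => integral_nonneg fun y => abs_nonneg _
      have hsum2 : ∑' b : ↥u, μ (Metric.closedBall (b:X) (σf b)) ≤
          ENNReal.ofReal (S⁻¹ * ∫ y in Metric.ball x₀ (4*R), |f y - c₀| ∂μ) := by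
        calc ∑' b : ↥u, μ (Metric.closedBall (b:X) (σf b))
            ≤ ∑' b : ↥u, ENNReal.ofReal
                (S⁻¹ * ∫ y in Metric.closedBall (b:X) (σf b), |f y - c₀| ∂μ) :=
              ENNReal.tsum_le_tsum hcheb
        _ = ENNReal.ofReal (∑' b : ↥u,
              S⁻¹ * ∫ y in Metric.closedBall (b:X) (σf b), |f y - c₀| ∂μ) :=
              (ENNReal.ofReal_tsum_of_nonneg
                (fun b => mul_nonneg (inv_nonneg.2 hSpos.le) (hterm_nonneg b))
                (hsumI.summable.mul_left S⁻¹)).symm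
        _ ≤ _ := by
              refine ENNReal.ofReal_le_ofReal ?_
              rw [tsum_mul_left]
              exact mul_le_mul_of_nonneg_left hIsum_le (inv_nonneg.2 hSpos.le)
      have h4int : ∫ y in Metric.ball x₀ (4*R), |f y - c₀| ∂μ ≤
          cμ^2*(1+cμ^2)*K*(μ B).toReal := by
        have i1 := integral_abs_sub_le_ball hdoub hbmo hloc
          (show (0:ℝ) < 4*R by positivity) (x := x₀) c₀
        have hscale4 : μ (Metric.ball x₀ (4*R)) ≤ ENNReal.ofReal (cμ^2) * μ B :=
          meas_ball_scale hdoub hcμ x₀ hR 2 (by norm_num)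
        have i2 : |(⨍ z in Metric.ball x₀ (4*R), f z ∂μ) - c₀| ≤ cμ^2*K := by
          refine avg_diff_ball_le hdoub hbmo hloc (by positivity) ?_ hμB.1.ne'
            (by positivity) hscale4
          exact ball_subset_ball (by linarith)
        have i3 : (μ (Metric.ball x₀ (4*R))).toReal ≤ cμ^2 * (μ B).toReal := by
          calc (μ (Metric.ball x₀ (4*R))).toReal ≤ (ENNReal.ofReal (cμ^2) * μ B).toReal :=
              ENNReal.toReal_mono (ENNReal.mul_ne_top ENNReal.ofReal_ne_top hμB.2.ne) hscale4
          _ = cμ^2*(μ B).toReal := by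
              rw [ENNReal.toReal_mul, ENNReal.toReal_ofReal (by positivity)]
        calc ∫ y in Metric.ball x₀ (4*R), |f y - c₀| ∂μ
            ≤ (μ (Metric.ball x₀ (4*R))).toReal *
              (K + |(⨍ z in Metric.ball x₀ (4*R), f z ∂μ) - c₀|) := i1
        _ ≤ (cμ^2 * (μ B).toReal) * (K + cμ^2*K) := by
              refine mul_le_mul i3 (by linarith [i2]) (by positivity) (by positivity)
        _ = cμ^2*(1+cμ^2)*K*(μ B).toReal := by ring
      have key : ENNReal.ofReal (cμ^2) *
          ENNReal.ofReal (S⁻¹ * ∫ y in Metric.ball x₀ (4*R), |f y - c₀| ∂μ) ≤ 2⁻¹ * μ B := by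
        have hreal : cμ^2 * (S⁻¹ * ∫ y in Metric.ball x₀ (4*R), |f y - c₀| ∂μ) ≤
            2⁻¹ * (μ B).toReal := by
          have h1 : S⁻¹ * ∫ y in Metric.ball x₀ (4*R), |f y - c₀| ∂μ ≤
              S⁻¹ * (cμ^2*(1+cμ^2)*K*(μ B).toReal) :=
            mul_le_mul_of_nonneg_left h4int (inv_nonneg.2 hSpos.le)
          have h2 : cμ^2 * (S⁻¹ * (cμ^2*(1+cμ^2)*K*(μ B).toReal)) = 2⁻¹*(μ B).toReal := by
            rw [hSdef]
            field_simp
          nlinarith [sq_nonneg cμ, pow_pos hc0 2]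
        calc ENNReal.ofReal (cμ^2) *
              ENNReal.ofReal (S⁻¹ * ∫ y in Metric.ball x₀ (4*R), |f y - c₀| ∂μ)
            = ENNReal.ofReal (cμ^2 * (S⁻¹ * ∫ y in Metric.ball x₀ (4*R), |f y - c₀| ∂μ)) := by
              rw [← ENNReal.ofReal_mul (by positivity)]
        _ ≤ ENNReal.ofReal (2⁻¹ * (μ B).toReal) := ENNReal.ofReal_le_ofReal hreal
        _ = ENNReal.ofReal 2⁻¹ * ENNReal.ofReal ((μ B).toReal) :=
              ENNReal.ofReal_mul (by norm_num)
        _ = 2⁻¹ * μ B := by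
              rw [ENNReal.ofReal_toReal hμB.2.ne, ENNReal.ofReal_inv_of_pos two_pos,
                ENNReal.ofReal_ofNat]
      calc μ E ≤ μ (⋃ b ∈ u,
            {y ∈ Metric.ball b (4 * σf b) |
              (n:ℝ) * Δ < |f y - ⨍ z in Metric.ball b (4 * σf b), f z ∂μ|}) := hEμ
      _ ≤ ∑' b : ↥u, μ {y ∈ Metric.ball (b:X) (4 * σf b) |
              (n:ℝ) * Δ < |f y - ⨍ z in Metric.ball (b:X) (4 * σf b), f z ∂μ|} :=
            measure_biUnion_le μ hu_cnt _
      _ ≤ ∑' b : ↥u, 2⁻¹ ^ n * μ (Metric.ball (b:X) (4 * σf b)) :=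
            ENNReal.tsum_le_tsum hbadμ
      _ = 2⁻¹ ^ n * ∑' b : ↥u, μ (Metric.ball (b:X) (4 * σf b)) := ENNReal.tsum_mul_left
      _ ≤ 2⁻¹ ^ n * (ENNReal.ofReal (cμ^2) * ∑' b : ↥u, μ (Metric.closedBall (b:X) (σf b))) :=
            mul_le_mul_right hsum1 _
      _ ≤ 2⁻¹ ^ n * (ENNReal.ofReal (cμ^2) *
            ENNReal.ofReal (S⁻¹ * ∫ y in Metric.ball x₀ (4*R), |f y - c₀| ∂μ)) := by
            exact mul_le_mul_right (mul_le_mul_right hsum2 _) _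
      _ ≤ 2⁻¹ ^ n * (2⁻¹ * μ B) := mul_le_mul_right key _
      _ = 2⁻¹ ^ (n+1) * μ B := by rw [← mul_assoc, pow_succ]

end JNProof

namespace JNProof

variable {X : Type*} [MetricSpace X] [MeasurableSpace X] [BorelSpace X]
  {μ : Measure X} {cμ : ℝ} {f : X → ℝ}

lemma subsingleton_of_small (hdoub : IsDoubling μ cμ) (hcμ : 1 ≤ cμ) (hs : cμ^2 < 2) :
    ∀ x y : X, x = y := by
  intro x y
  by_contra hne
  set d := dist x y with hd
  have hd0 : 0 < d := dist_pos.2 hne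
  have hdisj : Disjoint (Metric.ball x (d/2)) (Metric.ball y (d/2)) :=
    Metric.ball_disjoint_ball (by linarith)
  have hsubx : Metric.ball x (d/2) ⊆ Metric.ball x (2*d) := ball_subset_ball (by linarith)
  have hsuby : Metric.ball y (d/2) ⊆ Metric.ball x (2*d) := by
    intro z hz
    have h1 : dist z y < d/2 := hz
    have h2 : dist z x ≤ dist z y + dist y x := dist_triangle _ _ _
    have h3 : dist y x = d := by rw [hd, dist_comm]
    show dist z x < 2*d
    linarith
  have hsuby' : Metric.ball x (d/2) ⊆ Metric.ball y (2*d) := by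
    intro z hz
    have h1 : dist z x < d/2 := hz
    have h2 : dist z y ≤ dist z x + dist x y := dist_triangle _ _ _
    show dist z y < 2*d
    linarith
  have hsubyy : Metric.ball y (d/2) ⊆ Metric.ball y (2*d) := ball_subset_ball (by linarith)
  have hx2 : μ (Metric.ball x (2*d)) ≤ ENNReal.ofReal (cμ^2) * μ (Metric.ball x (d/2)) :=
    meas_ball_scale hdoub hcμ x (half_pos hd0) 2 (by linarith)
  have hy2 : μ (Metric.ball y (2*d)) ≤ ENNReal.ofReal (cμ^2) * μ (Metric.ball y (d/2)) :=
    meas_ball_scale hdoub hcμ y (half_pos hd0) 2 (by linarith)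
  have hunion : μ (Metric.ball x (d/2)) + μ (Metric.ball y (d/2)) =
      μ (Metric.ball x (d/2) ∪ Metric.ball y (d/2)) :=
    (measure_union hdisj measurableSet_ball).symm
  have hfin : ∀ (z : X), μ (Metric.ball z (d/2)) ≠ ⊤ :=
    fun z => (hdoub.1 z (d/2) (half_pos hd0)).2.ne
  set a := (μ (Metric.ball x (d/2))).toReal with hadef
  set b := (μ (Metric.ball y (d/2))).toReal with hbdef
  have ha0 : 0 < a := ENNReal.toReal_pos (hdoub.1 x (d/2) (half_pos hd0)).1.ne' (hfin x)
  have hb0 : 0 < b := ENNReal.toReal_pos (hdoub.1 y (d/2) (half_pos hd0)).1.ne' (hfin y)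
  have hxr : a + b ≤ cμ^2 * a := by
    have h1 : μ (Metric.ball x (d/2)) + μ (Metric.ball y (d/2)) ≤
        ENNReal.ofReal (cμ^2) * μ (Metric.ball x (d/2)) := by
      rw [hunion]
      exact (measure_mono (union_subset hsubx hsuby)).trans hx2
    have h2 := ENNReal.toReal_mono
      (ENNReal.mul_ne_top ENNReal.ofReal_ne_top (hfin x)) h1
    rw [ENNReal.toReal_add (hfin x) (hfin y), ENNReal.toReal_mul,
      ENNReal.toReal_ofReal (by positivity)] at h2
    exact h2
  have hyr : a + b ≤ cμ^2 * b := by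
    have h1 : μ (Metric.ball x (d/2)) + μ (Metric.ball y (d/2)) ≤
        ENNReal.ofReal (cμ^2) * μ (Metric.ball y (d/2)) := by
      rw [hunion]
      exact (measure_mono (union_subset hsuby' hsubyy)).trans hy2
    have h2 := ENNReal.toReal_mono
      (ENNReal.mul_ne_top ENNReal.ofReal_ne_top (hfin y)) h1
    rw [ENNReal.toReal_add (hfin x) (hfin y), ENNReal.toReal_mul,
      ENNReal.toReal_ofReal (by positivity)] at h2
    exact h2
  nlinarith

end JNProof


open JNProof in
/-- The John–Nirenberg inequality for BMO in a doubling metric measure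
space: if `f ∈ BMO(X)`, then for every ball `B` and every `λ > 0`,
`μ({x ∈ B : |f(x) - f_B| > λ}) ≤ c₁ μ(B) exp(-c₂ λ / ‖f‖_♯)` with `c₁ = 4 cμ⁷` and
`c₂ = log 2 / (2 cμ⁸)`. -/
theorem john_nirenberg_bmo {X : Type*} [MetricSpace X] [MeasurableSpace X] [BorelSpace X]
    (μ : Measure X) (cμ : ℝ) (hcμ : 1 ≤ cμ) (hdoub : IsDoubling μ cμ)
    (f : X → ℝ) (hloc : ∀ (x : X) (r : ℝ), IntegrableOn f (Metric.ball x r) μ)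
    (hbmo : BddAbove (oscSet μ f)) :
    ∀ (x₀ : X) (R : ℝ), 0 < R → ∀ lam : ℝ, 0 < lam →
      μ {x ∈ Metric.ball x₀ R | lam < |f x - ⨍ y in Metric.ball x₀ R, f y ∂μ|}
        ≤ ENNReal.ofReal (4 * cμ ^ 7 *
            Real.exp (-(Real.log 2 / (2 * cμ ^ 8)) * lam / bmoSeminorm μ f)) *
          μ (Metric.ball x₀ R) := by
  intro x₀ R hR lam hlam
  set K := bmoSeminorm μ f with hKdef
  set t := 4 * cμ ^ 7 * Real.exp (-(Real.log 2 / (2 * cμ ^ 8)) * lam / K) with htdef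
  have hc0 : (0:ℝ) < cμ := lt_of_lt_of_le one_pos hcμ
  have hμB := hdoub.1 x₀ R hR
  by_cases ht1 : 1 ≤ t
  · calc μ {x ∈ Metric.ball x₀ R | lam < |f x - ⨍ y in Metric.ball x₀ R, f y ∂μ|}
        ≤ μ (Metric.ball x₀ R) := measure_mono (sep_subset _ _)
    _ = 1 * μ (Metric.ball x₀ R) := (one_mul _).symm
    _ ≤ ENNReal.ofReal t * μ (Metric.ball x₀ R) := by
        refine mul_le_mul_left ?_ _
        rw [← ENNReal.ofReal_one]
        exact ENNReal.ofReal_le_ofReal ht1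
  · push_neg at ht1
    have hc7 : (1:ℝ) ≤ cμ^7 := one_le_pow₀ hcμ
    have hK0 : 0 < K := by
      rcases lt_trichotomy K 0 with h | h | h
      · exfalso
        have hnum : -(Real.log 2 / (2 * cμ ^ 8)) * lam < 0 := by
          have hl2 : 0 < Real.log 2 := Real.log_pos one_lt_two
          have : 0 < Real.log 2 / (2 * cμ ^ 8) := by positivity
          nlinarith
        have harg : 0 < -(Real.log 2 / (2 * cμ ^ 8)) * lam / K := div_pos_of_neg_of_neg hnum h
        have hexp1 : 1 ≤ Real.exp (-(Real.log 2 / (2 * cμ ^ 8)) * lam / K) :=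
          Real.one_le_exp harg.le
        have : (1:ℝ) ≤ t := by
          rw [htdef]
          nlinarith
        linarith
      · exfalso
        have : t = 4*cμ^7 := by rw [htdef, h]; simp
        nlinarith
      · exact h
    by_cases hc2 : 2 ≤ cμ^2
    · -- main case
      haveI hSC : SecondCountableTopology X := secondCountable_of_doubling hdoub hcμ x₀
      haveI : IsUnifLocDoublingMeasure μ := by
        refine ⟨⟨(cμ^2).toNNReal, ?_⟩⟩
        refine Filter.eventually_of_mem self_mem_nhdsWithin fun ε hε => fun x => ?_
        have hε0 : (0:ℝ) < ε := hε
        show μ (Metric.closedBall x (2*ε)) ≤ ENNReal.ofReal (cμ^2) * μ (Metric.closedBall x ε)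
        calc μ (Metric.closedBall x (2*ε)) ≤ μ (Metric.ball x (4*ε)) :=
            measure_mono (Metric.closedBall_subset_ball (by linarith))
        _ ≤ ENNReal.ofReal (cμ^2) * μ (Metric.ball x ε) :=
            meas_ball_scale hdoub hcμ x hε0 2 (by norm_num)
        _ ≤ ENNReal.ofReal (cμ^2) * μ (Metric.closedBall x ε) :=
            mul_le_mul_right (measure_mono Metric.ball_subset_closedBall) _
      haveI : IsLocallyFiniteMeasure μ :=
        ⟨fun x => ⟨Metric.ball x 1, ball_mem_nhds x one_pos, (hdoub.1 x 1 one_pos).2⟩⟩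
      set Δ := 2*cμ^8*K with hΔdef
      have hΔpos : 0 < Δ := by positivity
      set n := ⌊lam / Δ⌋₊ with hndef
      have hnle : (n:ℝ) * Δ ≤ lam := by
        have h1 : (n:ℝ) ≤ lam / Δ := Nat.floor_le (le_of_lt (div_pos hlam hΔpos))
        calc (n:ℝ) * Δ ≤ (lam / Δ) * Δ := mul_le_mul_of_nonneg_right h1 hΔpos.le
        _ = lam := by field_simp
      have hmain := jn_induction hdoub hcμ hc2 hloc hbmo hK0 n x₀ R hR
      have hsub : {x ∈ Metric.ball x₀ R | lam < |f x - ⨍ y in Metric.ball x₀ R, f y ∂μ|} ⊆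
          {y ∈ Metric.ball x₀ R | (n:ℝ) * Δ < |f y - ⨍ z in Metric.ball x₀ R, f z ∂μ|} :=
        fun y hy => ⟨hy.1, lt_of_le_of_lt hnle hy.2⟩
      have hpow : (2⁻¹ : ℝ≥0∞)^n ≤ ENNReal.ofReal t := by
        have h2 : (2⁻¹:ℝ≥0∞)^n = ENNReal.ofReal ((2⁻¹:ℝ)^n) := by
          rw [ENNReal.ofReal_pow (by norm_num)]
          rw [ENNReal.ofReal_inv_of_pos two_pos, ENNReal.ofReal_ofNat]
        rw [h2]
        refine ENNReal.ofReal_le_ofReal ?_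
        have hfloor : lam / Δ < (n:ℝ) + 1 := Nat.lt_floor_add_one _
        have harg : -(Real.log 2 / (2 * cμ ^ 8)) * lam / K = -(Real.log 2 * (lam/Δ)) := by
          rw [hΔdef]
          field_simp
        have hexp : (2⁻¹:ℝ)^(n+1) ≤ Real.exp (-(Real.log 2 / (2 * cμ ^ 8)) * lam / K) := by
          rw [harg]
          have hl2 : (0:ℝ) < Real.log 2 := Real.log_pos one_lt_two
          have h1 : Real.log 2 * (lam/Δ) ≤ Real.log 2 * ((n:ℝ)+1) :=
            mul_le_mul_of_nonneg_left hfloor.le hl2.le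
          have h3 : (2⁻¹:ℝ)^(n+1) = Real.exp (-(Real.log 2 * ((n:ℝ)+1))) := by
            rw [Real.exp_neg]
            have h4 : Real.log 2 * ((n:ℝ)+1) = ((n+1 : ℕ):ℝ) * Real.log 2 := by
              push_cast
              ring
            rw [h4, Real.exp_nat_mul, Real.exp_log two_pos]
            rw [← inv_pow]
          rw [h3]
          exact Real.exp_le_exp.2 (by linarith)
        have hexp_pos : (0:ℝ) < (2⁻¹:ℝ)^(n+1) := by positivity
        calc (2⁻¹:ℝ)^n = 4 * (2⁻¹:ℝ)^(n+1) * 2⁻¹ := by rw [pow_succ]; ring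
        _ ≤ 4 * cμ^7 * (2⁻¹:ℝ)^(n+1) := by nlinarith
        _ ≤ t := by
            rw [htdef]
            have h5 : 0 ≤ 4*cμ^7 := by positivity
            exact mul_le_mul_of_nonneg_left hexp h5
      calc μ {x ∈ Metric.ball x₀ R | lam < |f x - ⨍ y in Metric.ball x₀ R, f y ∂μ|}
          ≤ μ {y ∈ Metric.ball x₀ R | (n:ℝ) * Δ < |f y - ⨍ z in Metric.ball x₀ R, f z ∂μ|} :=
            measure_mono hsub
      _ ≤ 2⁻¹^n * μ (Metric.ball x₀ R) := hmain
      _ ≤ ENNReal.ofReal t * μ (Metric.ball x₀ R) := mul_le_mul_left hpow _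
    · -- degenerate case: the space is a single point
      have hsing := subsingleton_of_small hdoub hcμ (lt_of_not_ge hc2)
      have hempty : {x ∈ Metric.ball x₀ R | lam < |f x - ⨍ y in Metric.ball x₀ R, f y ∂μ|} = ∅ := by
        refine eq_empty_iff_forall_notMem.2 fun y hy => ?_
        have havg : (⨍ z in Metric.ball x₀ R, f z ∂μ) = f x₀ := by
          have hconst : Set.EqOn f (fun _ => f x₀) (Metric.ball x₀ R) :=
            fun z _ => by rw [hsing z x₀]
          rw [setAverage_eq, setIntegral_congr_fun measurableSet_ball hconst,
            setIntegral_const, smul_eq_mul, smul_eq_mul, ← mul_assoc,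
            inv_mul_cancel₀ (show μ.real (Metric.ball x₀ R) ≠ 0 from ENNReal.toReal_ne_zero.2 ⟨hμB.1.ne', hμB.2.ne⟩), one_mul]
        have hy2 := hy.2
        rw [havg, hsing y x₀, sub_self, abs_zero] at hy2
        linarith
      rw [hempty]
      simp
end

section
/- Let $(X,d,\mu)$ be a doubling metric measure space with doubling constant $c_\mu$, let $f\in\mathrm{BMO}(X)$ with $\|f\|_\sharp\le 1$, fix a ball $B_0$ with $f_{B_0}=0$, and let $\lambda>\gamma\ge 2c_\mu^8$. Let $\{B_j(\lambda)\}_j$ and $\{B_k(\gamma)\}_k$ be families of Calderón–Zygmund balls for $|f|$ at levels $\lambda$ and $\gamma$ relative to $B_0$, such that every $B_j(\lambda)$ is contained in $5B_k(\gamma)$ for some $k$. Then $(\lambda-\gamma)\sum_j\mu(B_j(\lambda)) \le c_\mu^3\sum_k\mu(B_k(\gamma))$. -/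
open MeasureTheory Metric Set ENNReal

/-- Good-λ estimate for BMO: if `‖f‖_♯ ≤ 1`, `f_{B₀} = 0`,
`λ > γ ≥ 2 cμ⁸`, and `{B j(λ)}`, `{B k(γ)}` are Calderón–Zygmund families for `|f|` at
levels `λ` and `γ` relative to `B₀` such that every `B j(λ)` is contained in some
`5 B k(γ)`, then `(λ - γ) ∑ⱼ μ(B j(λ)) ≤ cμ³ ∑ₖ μ(B k(γ))`. -/
theorem bmo_good_lambda_step {X : Type*} [MetricSpace X] [MeasurableSpace X] [BorelSpace X]
    (μ : Measure X) (cμ : ℝ) (hcμ : 1 ≤ cμ) (hdoub : IsDoubling μ cμ)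
    (f : X → ℝ) (hloc : ∀ (x : X) (r : ℝ), IntegrableOn f (Metric.ball x r) μ)
    (hbmo : ∀ (x : X) (r : ℝ), 0 < r →
      ⨍ y in Metric.ball x r, |f y - ⨍ z in Metric.ball x r, f z ∂μ| ∂μ ≤ 1)
    (x₀ : X) (R : ℝ) (hR : 0 < R)
    (hmean : ⨍ y in Metric.ball x₀ R, f y ∂μ = 0)
    (lam γ : ℝ) (hγ : 2 * cμ ^ 8 ≤ γ) (hlamγ : γ < lam)
    (Sl Sg : Set ℕ) (cl cg : ℕ → X) (rl rg : ℕ → ℝ)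
    (hCZl : IsCZBalls μ cμ (fun x => |f x|) x₀ R lam Sl cl rl)
    (hCZg : IsCZBalls μ cμ (fun x => |f x|) x₀ R γ Sg cg rg)
    (hnest : ∀ j ∈ Sl, ∃ k ∈ Sg,
      Metric.ball (cl j) (rl j) ⊆ Metric.ball (cg k) (5 * rg k)) :
    ENNReal.ofReal (lam - γ) * ∑' j : Sl, μ (Metric.ball (cl j.1) (rl j.1))
      ≤ ENNReal.ofReal (cμ ^ 3) * ∑' k : Sg, μ (Metric.ball (cg k.1) (rg k.1)) := by
  obtain ⟨hrl, -, -, hdisjl, -, havgl, -⟩ := hCZl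
  obtain ⟨hrg, -, -, -, -, -, havg5g⟩ := hCZg
  have hfin : ∀ (x : X) (r : ℝ), 0 < r → μ (ball x r) ≠ ⊤ := fun x r hr => (hdoub.1 x r hr).2.ne
  have hpos : ∀ (x : X) (r : ℝ), 0 < r → (0:ℝ) < (μ (ball x r)).toReal := fun x r hr =>
    ENNReal.toReal_pos (hdoub.1 x r hr).1.ne' (hfin x r hr)
  have hc0 : (0:ℝ) ≤ cμ := by linarith
  -- doubling for radius 5
  have hdouble5 : ∀ (x : X) (r : ℝ), 0 < r →
      μ (ball x (5 * r)) ≤ ENNReal.ofReal (cμ ^ 3) * μ (ball x r) := by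
    intro x r hr
    have h1 := hdoub.2 x r hr
    have h2 := hdoub.2 x (2 * r) (by linarith)
    have h4 := hdoub.2 x (2 * (2 * r)) (by linarith)
    have hmono : μ (ball x (5 * r)) ≤ μ (ball x (2 * (2 * (2 * r)))) :=
      measure_mono (Metric.ball_subset_ball (by linarith))
    calc μ (ball x (5 * r)) ≤ ENNReal.ofReal cμ * μ (ball x (2 * (2 * r))) := hmono.trans h4
      _ ≤ ENNReal.ofReal cμ * (ENNReal.ofReal cμ * μ (ball x (2 * r))) := by gcongr
      _ ≤ ENNReal.ofReal cμ * (ENNReal.ofReal cμ * (ENNReal.ofReal cμ * μ (ball x r))) := by gcongr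
      _ = ENNReal.ofReal (cμ ^ 3) * μ (ball x r) := by
          rw [ENNReal.ofReal_pow hc0]; ring
  -- key estimate for each ball at level lam
  have key : ∀ j ∈ Sl, ∀ k ∈ Sg,
      ENNReal.ofReal (lam - γ) * μ (ball (cl j) (rl j))
        ≤ ∫⁻ x in ball (cl j) (rl j),
            ENNReal.ofReal |f x - ⨍ z in ball (cg k) (5 * rg k), f z ∂μ| ∂μ := by
    intro j hj k hk
    set a := ⨍ z in ball (cg k) (5 * rg k), f z ∂μ with ha
    set B := ball (cl j) (rl j) with hB
    have hrj := hrl j hj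
    have hm : (0:ℝ) < (μ B).toReal := hpos _ _ hrj
    have hfB : IntegrableOn f B μ := hloc _ _
    have hfaB : IntegrableOn (fun x => |f x|) B μ := hfB.abs
    have hconst : IntegrableOn (fun _ : X => |a|) B μ :=
      integrableOn_const (hdoub.1 _ _ hrj).2.ne
    have hconst' : IntegrableOn (fun _ : X => a) B μ :=
      integrableOn_const (hdoub.1 _ _ hrj).2.ne
    have hgB : IntegrableOn (fun x => |f x - a|) B μ := (hfB.sub hconst').abs
    -- lam * m < ∫_B |f|
    have h1 : lam * (μ B).toReal < ∫ x in B, |f x| ∂μ := by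
      have hav := (havgl j hj).1
      rw [setAverage_eq, smul_eq_mul] at hav
      have := mul_lt_mul_of_pos_right hav hm
      calc lam * (μ B).toReal < (μ B).toReal⁻¹ * (∫ x in B, |f x| ∂μ) * (μ B).toReal := this
        _ = ∫ x in B, |f x| ∂μ := by field_simp
    -- |a| ≤ γ
    have h2 : |a| ≤ γ := by
      have hrk := hrg k hk
      have h5 : (0:ℝ) < 5 * rg k := by linarith
      have hm5 : (0:ℝ) ≤ (μ (ball (cg k) (5 * rg k))).toReal⁻¹ := by positivity
      have habs : |a| ≤ ⨍ z in ball (cg k) (5 * rg k), |f z| ∂μ := by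
        rw [ha, setAverage_eq, setAverage_eq, smul_eq_mul, smul_eq_mul, abs_mul,
          abs_of_nonneg (a := (μ.real (ball (cg k) (5 * rg k)))⁻¹) hm5]
        refine mul_le_mul_of_nonneg_left ?_ hm5
        simpa [Real.norm_eq_abs] using
          norm_integral_le_integral_norm (μ := μ.restrict (ball (cg k) (5 * rg k))) f
      exact habs.trans (havg5g k hk).2
    -- real estimate
    have h3 : (lam - γ) * (μ B).toReal ≤ ∫ x in B, |f x - a| ∂μ := by
      have hmono : ∫ x in B, (|f x| - |a|) ∂μ ≤ ∫ x in B, |f x - a| ∂μ :=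
        integral_mono (hfaB.sub hconst) hgB fun x => abs_sub_abs_le_abs_sub _ _
      have hsplit : ∫ x in B, (|f x| - |a|) ∂μ
          = (∫ x in B, |f x| ∂μ) - (μ B).toReal * |a| := by
        rw [integral_sub hfaB hconst, setIntegral_const, smul_eq_mul, measureReal_def]
      nlinarith [hmono, hsplit, h1, hm, h2]
    calc ENNReal.ofReal (lam - γ) * μ B
        = ENNReal.ofReal ((lam - γ) * (μ B).toReal) := by
          rw [ENNReal.ofReal_mul (by linarith), ENNReal.ofReal_toReal (hfin _ _ hrj)]
      _ ≤ ENNReal.ofReal (∫ x in B, |f x - a| ∂μ) := ENNReal.ofReal_le_ofReal h3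
      _ = ∫⁻ x in B, ENNReal.ofReal |f x - a| ∂μ :=
          MeasureTheory.ofReal_integral_eq_lintegral_ofReal hgB
            (Filter.Eventually.of_forall fun x => abs_nonneg _)
  -- BMO step
  have bmoStep : ∀ k ∈ Sg,
      (∫⁻ x in ball (cg k) (5 * rg k),
          ENNReal.ofReal |f x - ⨍ z in ball (cg k) (5 * rg k), f z ∂μ| ∂μ)
        ≤ μ (ball (cg k) (5 * rg k)) := by
    intro k hk
    set a := ⨍ z in ball (cg k) (5 * rg k), f z ∂μ with ha
    set B5 := ball (cg k) (5 * rg k) with hB5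
    have h5 : (0:ℝ) < 5 * rg k := by linarith [hrg k hk]
    have hm : (0:ℝ) < (μ B5).toReal := hpos _ _ h5
    have hconst' : IntegrableOn (fun _ : X => a) B5 μ :=
      integrableOn_const (hdoub.1 _ _ h5).2.ne
    have hgB : IntegrableOn (fun x => |f x - a|) B5 μ := ((hloc _ _).sub hconst').abs
    have hav := hbmo (cg k) (5 * rg k) h5
    rw [setAverage_eq, smul_eq_mul] at hav
    have hint : ∫ x in B5, |f x - a| ∂μ ≤ (μ B5).toReal := by
      have h := mul_le_mul_of_nonneg_left hav hm.le
      rw [measureReal_def, ← hB5, ← mul_assoc, mul_inv_cancel₀ hm.ne', one_mul, mul_one] at h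
      exact h
    calc (∫⁻ x in B5, ENNReal.ofReal |f x - a| ∂μ)
        = ENNReal.ofReal (∫ x in B5, |f x - a| ∂μ) :=
          (MeasureTheory.ofReal_integral_eq_lintegral_ofReal hgB
            (Filter.Eventually.of_forall fun x => abs_nonneg _)).symm
      _ ≤ ENNReal.ofReal (μ B5).toReal := ENNReal.ofReal_le_ofReal hint
      _ = μ B5 := ENNReal.ofReal_toReal (hfin _ _ h5)
  -- choice of parent ball
  have hκ' : ∀ j : Sl, ∃ k : Sg,
      ball (cl j.1) (rl j.1) ⊆ ball (cg k.1) (5 * rg k.1) := by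
    intro j; obtain ⟨k, hk, hsub⟩ := hnest j.1 j.2; exact ⟨⟨k, hk⟩, hsub⟩
  choose κ hκs using hκ'
  set g : Sg → X → ℝ≥0∞ := fun k x =>
    ENNReal.ofReal |f x - ⨍ z in ball (cg k.1) (5 * rg k.1), f z ∂μ| with hg
  -- inner estimate for each fiber
  have inner : ∀ k : Sg,
      (∑' j : {j : Sl // κ j = k}, ∫⁻ x in ball (cl j.1.1) (rl j.1.1), g k x ∂μ)
        ≤ μ (ball (cg k.1) (5 * rg k.1)) := by
    intro k
    have hmeas : ∀ j : {j : Sl // κ j = k}, MeasurableSet (ball (cl j.1.1) (rl j.1.1)) :=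
      fun j => measurableSet_ball
    have hdisj : Pairwise (Function.onFun Disjoint
        fun j : {j : Sl // κ j = k} => ball (cl j.1.1) (rl j.1.1)) := by
      intro i i' hne
      exact hdisjl i.1.2 i'.1.2 fun h => hne (Subtype.ext (Subtype.ext h))
    calc (∑' j : {j : Sl // κ j = k}, ∫⁻ x in ball (cl j.1.1) (rl j.1.1), g k x ∂μ)
        = ∫⁻ x in ⋃ j : {j : Sl // κ j = k}, ball (cl j.1.1) (rl j.1.1), g k x ∂μ :=
          (lintegral_iUnion hmeas hdisj _).symm
      _ ≤ ∫⁻ x in ball (cg k.1) (5 * rg k.1), g k x ∂μ := by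
          refine lintegral_mono_set (iUnion_subset fun j => ?_)
          have := hκs j.1
          rwa [j.2] at this
      _ ≤ μ (ball (cg k.1) (5 * rg k.1)) := bmoStep k.1 k.2
  calc ENNReal.ofReal (lam - γ) * ∑' j : Sl, μ (ball (cl j.1) (rl j.1))
      = ∑' j : Sl, ENNReal.ofReal (lam - γ) * μ (ball (cl j.1) (rl j.1)) :=
        ENNReal.tsum_mul_left.symm
    _ ≤ ∑' j : Sl, ∫⁻ x in ball (cl j.1) (rl j.1), g (κ j) x ∂μ :=
        ENNReal.tsum_le_tsum fun j => key j.1 j.2 (κ j).1 (κ j).2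
    _ = ∑' (k : Sg) (j : {j : Sl // κ j = k}),
          ∫⁻ x in ball (cl j.1.1) (rl j.1.1), g (κ j.1) x ∂μ := by
        rw [← ENNReal.tsum_sigma]
        exact ((Equiv.sigmaFiberEquiv κ).tsum_eq fun j : Sl =>
          ∫⁻ x in ball (cl j.1) (rl j.1), g (κ j) x ∂μ).symm
    _ = ∑' (k : Sg) (j : {j : Sl // κ j = k}),
          ∫⁻ x in ball (cl j.1.1) (rl j.1.1), g k x ∂μ := by
        refine tsum_congr fun k => tsum_congr fun j => ?_
        rw [j.2]
    _ ≤ ∑' k : Sg, μ (ball (cg k.1) (5 * rg k.1)) := ENNReal.tsum_le_tsum inner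
    _ ≤ ∑' k : Sg, ENNReal.ofReal (cμ ^ 3) * μ (ball (cg k.1) (rg k.1)) :=
        ENNReal.tsum_le_tsum fun k => hdouble5 _ _ (hrg k.1 k.2)
    _ = ENNReal.ofReal (cμ ^ 3) * ∑' k : Sg, μ (ball (cg k.1) (rg k.1)) :=
        ENNReal.tsum_mul_left
end

section
/- Let $p>1$ and let $f(x)=x^{-1/p}$ on $Q_0=(0,2)\subset\mathbb{R}$. With the partition $Q_j=(2^{-j},2^{1-j})$ for $j=0,1,2,\dots$ of $Q_0$, the sum $\sum_{j=0}^\infty |Q_j|\left(\fint_{Q_j}|f-f_{Q_j}|\,dx\right)^p$ diverges; consequently $f$ does not satisfy the $JN_p(Q_0)$ condition for any finite constant. -/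
open MeasureTheory Set ENNReal

/-- `f` satisfies the John–Nirenberg `JN_p` condition on the interval `Q₀ ⊆ ℝ` with
constant `K`: `∑ᵢ |Qᵢ| (⨍_{Qᵢ} |f - f_{Qᵢ}| dx)^p ≤ K^p` for every countable family
`{Qᵢ}` of subintervals of `Q₀` with pairwise disjoint interiors whose union is `Q₀`. -/
def IsJNpInterval (p : ℝ) (Q₀ : Set ℝ) (f : ℝ → ℝ) (K : ℝ) : Prop :=
  ∀ (S : Set ℕ) (Q : ℕ → Set ℝ),
    (∀ i ∈ S, (Q i).OrdConnected ∧ Q i ⊆ Q₀) →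
    (S.Pairwise fun i j => Disjoint (interior (Q i)) (interior (Q j))) →
    (⋃ i ∈ S, Q i) = Q₀ →
    ∑' i : S, volume (Q i.1) *
        ENNReal.ofReal ((⨍ x in Q i.1, |f x - ⨍ y in Q i.1, f y|) ^ p)
      ≤ ENNReal.ofReal (K ^ p)

lemma g_pos (q : ℝ) (hq0 : 0 < q) (hq1 : q < 1) : 0 < 2*(3/2:ℝ)^q - 2^q - 1 := by
  have h := (Real.strictConcaveOn_rpow hq0 hq1).2 (show (2:ℝ) ∈ Ici (0:ℝ) by norm_num)
    (show (4:ℝ) ∈ Ici (0:ℝ) by norm_num) (by norm_num)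
    (show (0:ℝ) < 1/2 by norm_num) (show (0:ℝ) < 1/2 by norm_num) (by norm_num)
  norm_num [smul_eq_mul] at h
  have h3 : (3:ℝ) ^ q = (3/2:ℝ)^q * 2^q := by
    rw [← Real.mul_rpow (by norm_num) (by norm_num)]; norm_num
  have h4 : (4:ℝ) ^ q = (2:ℝ)^q * 2^q := by
    rw [← Real.mul_rpow (by norm_num) (by norm_num)]; norm_num
  have h2q : (0:ℝ) < 2^q := Real.rpow_pos_of_pos (by norm_num) q
  nlinarith [h, h3, h4, h2q]

lemma int_Ioo_rpow (a b r : ℝ) (hab : a ≤ b) (hr : -1 < r) :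
    ∫ x in Ioo a b, x ^ r = (b ^ (r+1) - a ^ (r+1))/(r+1) := by
  rw [← MeasureTheory.integral_Ioc_eq_integral_Ioo, ← intervalIntegral.integral_of_le hab,
    integral_rpow (Or.inl hr)]

lemma intOn_rpow (a b r : ℝ) (ha : 0 < a) : IntegrableOn (fun x : ℝ => x ^ r) (Ioo a b) := by
  have hc : ContinuousOn (fun x : ℝ => x ^ r) (Icc a b) := fun x hx =>
    (Real.continuousAt_rpow_const x r (Or.inl (ha.trans_le hx.1).ne')).continuousWithinAt
  exact (hc.integrableOn_Icc).mono_set Ioo_subset_Icc_self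

lemma key (p : ℝ) (hp : 1 < p) : ∃ C : ℝ, 0 < C ∧ ∀ a : ℝ, 0 < a →
    C ≤ a * (⨍ x in Ioo a (2*a), |x ^ (-(1/p)) - ⨍ y in Ioo a (2*a), y ^ (-(1/p))|) ^ p := by
  have hp0 : 0 < p := by linarith
  set r : ℝ := -(1/p) with hrdef
  have hr : -1 < r := by
    rw [hrdef, neg_lt_neg_iff]
    exact (div_lt_one hp0).2 hp
  have hr0 : r < 0 := by
    rw [hrdef]; simp [one_div, inv_pos.2 hp0]
  set q : ℝ := r + 1 with hqdef
  have hq0 : 0 < q := by linarith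
  have hq1 : q < 1 := by linarith
  set g : ℝ := 2*(3/2:ℝ)^q - 2^q - 1 with hgdef
  have hg : 0 < g := g_pos q hq0 hq1
  set c : ℝ := g / (2*q) with hcdef
  have hc : 0 < c := div_pos hg (by linarith)
  refine ⟨c ^ p, Real.rpow_pos_of_pos hc p, fun a ha => ?_⟩
  have ha2 : a < 2 * a := by linarith
  have h32 : a < 3/2 * a := by linarith
  have h32' : 3/2 * a ≤ 2 * a := by linarith
  -- volume computations
  have hvol : (volume (Ioo a (2*a))).toReal = a := by
    rw [Real.volume_Ioo, ENNReal.toReal_ofReal (by linarith)]; ring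
  have hvol' : (volume (Ioo a (3/2*a))).toReal = a/2 := by
    rw [Real.volume_Ioo, ENNReal.toReal_ofReal (by linarith)]; ring
  -- mean value m
  set A : ℝ := a ^ q with hAdef
  have hA : 0 < A := Real.rpow_pos_of_pos ha q
  have h2aq : (2*a) ^ q = 2 ^ q * A := Real.mul_rpow (by norm_num) ha.le
  have h32aq : (3/2*a) ^ q = (3/2) ^ q * A := Real.mul_rpow (by norm_num) ha.le
  have hI : ∫ x in Ioo a (2*a), x ^ r = (2 ^ q - 1)/q * A := by
    rw [int_Ioo_rpow a (2*a) r ha2.le hr, ← hqdef, h2aq]; ring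
  have hI' : ∫ x in Ioo a (3/2*a), x ^ r = ((3/2:ℝ) ^ q - 1)/q * A := by
    rw [int_Ioo_rpow a (3/2*a) r h32.le hr, ← hqdef, h32aq]; ring
  set m : ℝ := ⨍ y in Ioo a (2*a), y ^ r with hmdef
  have hm : m = (2 ^ q - 1)/q * A / a := by
    rw [hmdef, setAverage_eq, hI, measureReal_def, hvol, smul_eq_mul]; ring
  -- integrability
  have hint : IntegrableOn (fun x : ℝ => |x ^ r - m|) (Ioo a (2*a)) :=
    ((intOn_rpow a (2*a) r ha).sub (integrableOn_const (by
      rw [Real.volume_Ioo]; exact ENNReal.ofReal_ne_top))).abs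
  have hint' : IntegrableOn (fun x : ℝ => |x ^ r - m|) (Ioo a (3/2*a)) :=
    hint.mono_set (Ioo_subset_Ioo le_rfl h32')
  have hint'' : IntegrableOn (fun x : ℝ => x ^ r - m) (Ioo a (3/2*a)) :=
    ((intOn_rpow a (3/2*a) r ha).sub (integrableOn_const (by
      rw [Real.volume_Ioo]; exact ENNReal.ofReal_ne_top)))
  -- lower bound chain
  have hD : ∫ x in Ioo a (3/2*a), (x ^ r - m) = g / (2*q) * A := by
    rw [integral_sub (intOn_rpow a (3/2*a) r ha) (integrableOn_const (by
      rw [Real.volume_Ioo]; exact ENNReal.ofReal_ne_top))]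
    rw [setIntegral_const, hI', measureReal_def, hvol', smul_eq_mul, hm, hgdef]
    field_simp
    ring
  have step1 : ∫ x in Ioo a (3/2*a), (x ^ r - m) ≤ ∫ x in Ioo a (3/2*a), |x ^ r - m| :=
    integral_mono hint'' hint' (fun x => le_abs_self _)
  have step2 : ∫ x in Ioo a (3/2*a), |x ^ r - m| ≤ ∫ x in Ioo a (2*a), |x ^ r - m| :=
    setIntegral_mono_set hint (Filter.Eventually.of_forall fun x => abs_nonneg _)
      (HasSubset.Subset.eventuallyLE (Ioo_subset_Ioo le_rfl h32'))
  have havg : c * a ^ r ≤ ⨍ x in Ioo a (2*a), |x ^ r - m| := by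
    rw [setAverage_eq, measureReal_def, hvol, smul_eq_mul]
    have : g / (2*q) * A ≤ ∫ x in Ioo a (2*a), |x ^ r - m| := by
      rw [← hD]; exact step1.trans step2
    have har : a ^ r = A / a := by
      rw [hAdef, hqdef, Real.rpow_add ha, Real.rpow_one]
      field_simp
    rw [har]
    calc c * (A/a) = a⁻¹ * (g/(2*q)*A) := by rw [hcdef]; field_simp
      _ ≤ a⁻¹ * ∫ x in Ioo a (2*a), |x ^ r - m| :=
          mul_le_mul_of_nonneg_left this (inv_nonneg.2 ha.le)
  -- conclude
  have hca : 0 < c * a ^ r := mul_pos hc (Real.rpow_pos_of_pos ha r)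
  have hmono : (c * a ^ r) ^ p ≤ (⨍ x in Ioo a (2*a), |x ^ r - m|) ^ p :=
    Real.rpow_le_rpow hca.le havg hp0.le
  have hcalc : (c * a ^ r) ^ p = c ^ p * a⁻¹ := by
    rw [Real.mul_rpow hc.le (Real.rpow_pos_of_pos ha r).le, ← Real.rpow_mul ha.le]
    congr 1
    rw [show r * p = -1 by rw [hrdef]; field_simp]
    exact Real.rpow_neg_one a
  calc c ^ p = a * (c ^ p * a⁻¹) := by field_simp
    _ ≤ a * (⨍ x in Ioo a (2*a), |x ^ r - m|) ^ p := by
        rw [← hcalc]; exact mul_le_mul_of_nonneg_left hmono ha.le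

lemma two_zpow_pos (n : ℤ) : (0:ℝ) < 2 ^ n := zpow_pos (by norm_num) n

lemma two_zpow_succ (j : ℕ) : (2:ℝ) ^ ((1:ℤ) - (j:ℤ)) = 2 * (2:ℝ) ^ (-(j:ℤ)) := by
  rw [sub_eq_add_neg, zpow_add₀ (by norm_num : (2:ℝ) ≠ 0), zpow_one]

/-- For `p > 1` and `f(x) = x^{-1/p}` on `(0, 2)`, with the partition
`Q_j = (2^{-j}, 2^{1-j})`, `j = 0, 1, 2, …`, the sum
`∑ⱼ |Q_j| (⨍_{Q_j} |f - f_{Q_j}| dx)^p` diverges; consequently `f` does not satisfy the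
`JN_p((0,2))` condition with any finite constant. -/
theorem power_function_not_JNp (p : ℝ) (hp : 1 < p) :
    (¬ Summable fun j : ℕ =>
      (volume (Set.Ioo ((2 : ℝ) ^ (-(j : ℤ))) ((2 : ℝ) ^ (1 - (j : ℤ))))).toReal *
        (⨍ x in Set.Ioo ((2 : ℝ) ^ (-(j : ℤ))) ((2 : ℝ) ^ (1 - (j : ℤ))),
          |x ^ (-(1 / p)) -
            ⨍ y in Set.Ioo ((2 : ℝ) ^ (-(j : ℤ))) ((2 : ℝ) ^ (1 - (j : ℤ))),
              y ^ (-(1 / p))|) ^ p) ∧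
    ∀ K : ℝ, ¬ IsJNpInterval p (Set.Ioo 0 2) (fun x => x ^ (-(1 / p))) K := by
  obtain ⟨C, hC, hkey⟩ := key p hp
  -- the j-th term of the series is bounded below by `C`
  have hterm : ∀ j : ℕ,
      C ≤ (volume (Set.Ioo ((2 : ℝ) ^ (-(j : ℤ))) ((2 : ℝ) ^ (1 - (j : ℤ))))).toReal *
        (⨍ x in Set.Ioo ((2 : ℝ) ^ (-(j : ℤ))) ((2 : ℝ) ^ (1 - (j : ℤ))),
          |x ^ (-(1 / p)) -
            ⨍ y in Set.Ioo ((2 : ℝ) ^ (-(j : ℤ))) ((2 : ℝ) ^ (1 - (j : ℤ))),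
              y ^ (-(1 / p))|) ^ p := by
    intro j
    set a : ℝ := (2:ℝ) ^ (-(j:ℤ)) with hadef
    have ha : 0 < a := two_zpow_pos _
    rw [two_zpow_succ j, ← hadef, Real.volume_Ioo,
      ENNReal.toReal_ofReal (by linarith), show 2*a - a = a by ring]
    exact hkey a ha
  constructor
  · intro hsum
    have h0 := hsum.tendsto_atTop_zero
    obtain ⟨j, hj⟩ := (h0.eventually_lt_const hC).exists
    exact absurd (hterm j) (not_le.2 hj)
  · intro K hK
    set Q : ℕ → Set ℝ := fun j => Ico ((2:ℝ) ^ (-(j:ℤ))) ((2:ℝ) ^ ((1:ℤ) - (j:ℤ))) with hQdef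
    have h1 : ∀ i ∈ (univ : Set ℕ), (Q i).OrdConnected ∧ Q i ⊆ Ioo 0 2 := by
      intro i _
      refine ⟨Set.ordConnected_Ico, fun x hx => ⟨lt_of_lt_of_le (two_zpow_pos _) hx.1, ?_⟩⟩
      have h2' : (2:ℝ) ^ ((1:ℤ) - (i:ℤ)) ≤ 2 ^ (1:ℤ) :=
        zpow_le_zpow_right₀ (by norm_num) (by omega)
      rw [zpow_one] at h2'
      exact lt_of_lt_of_le hx.2 h2'
    have h2 : (univ : Set ℕ).Pairwise fun i j =>
        Disjoint (interior (Q i)) (interior (Q j)) := by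
      intro i _ j _ hij
      have key2 : ∀ i j : ℕ, i < j → Disjoint (interior (Q i)) (interior (Q j)) := by
        intro i j hij
        rw [hQdef]
        simp only [interior_Ico]
        rw [Set.disjoint_left]
        intro x hx hx'
        have hle : (2:ℝ) ^ ((1:ℤ) - (j:ℤ)) ≤ 2 ^ (-(i:ℤ)) :=
          zpow_le_zpow_right₀ (by norm_num) (by omega)
        exact absurd (hx'.2.trans_le (hle.trans hx.1.le)) (lt_irrefl x)
      rcases hij.lt_or_gt with h | h
      · exact key2 i j h
      · exact (key2 j i h).symm
    have h3 : (⋃ i ∈ (univ : Set ℕ), Q i) = Ioo 0 2 := by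
      apply Set.Subset.antisymm
      · refine Set.iUnion₂_subset fun i _ => (h1 i trivial).2
      · intro x hx
        have hex : ∃ n : ℕ, (2:ℝ) ^ (-(n:ℤ)) ≤ x := by
          obtain ⟨n, hn⟩ := exists_pow_lt_of_lt_one hx.1 (show (1/2:ℝ) < 1 by norm_num)
          refine ⟨n, le_of_lt ?_⟩
          rw [zpow_neg, zpow_natCast]
          calc ((2:ℝ)^n)⁻¹ = (1/2:ℝ)^n := by rw [one_div, inv_pow]
            _ < x := hn
        classical
        set j := Nat.find hex with hjdef
        have hjx : (2:ℝ) ^ (-(j:ℤ)) ≤ x := Nat.find_spec hex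
        have hxj : x < (2:ℝ) ^ ((1:ℤ) - (j:ℤ)) := by
          rcases Nat.eq_zero_or_pos j with h0 | h0
          · rw [h0]; simpa using hx.2
          · obtain ⟨k, hk⟩ := Nat.exists_eq_add_of_lt h0
            have hmin : ¬ ((2:ℝ) ^ (-(k:ℤ)) ≤ x) := Nat.find_min hex (by omega)
            push_neg at hmin
            have : (1:ℤ) - (j:ℤ) = -(k:ℤ) := by omega
            rw [this]
            exact hmin
        exact Set.mem_iUnion₂.2 ⟨j, trivial, hjx, hxj⟩
    have hle := hK (univ : Set ℕ) Q h1 h2 h3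
    -- each summand is at least `ofReal C`
    have hsummand : ∀ i : (univ : Set ℕ), ENNReal.ofReal C ≤
        volume (Q i.1) * ENNReal.ofReal
          ((⨍ x in Q i.1, |x ^ (-(1/p)) - ⨍ y in Q i.1, y ^ (-(1/p))|) ^ p) := by
      intro i
      set a : ℝ := (2:ℝ) ^ (-(i.1:ℤ)) with hadef
      have ha : 0 < a := two_zpow_pos _
      have havg : (⨍ x in Q i.1, |x ^ (-(1/p)) - ⨍ y in Q i.1, y ^ (-(1/p))|)
          = ⨍ x in Ioo a (2*a), |x ^ (-(1/p)) - ⨍ y in Ioo a (2*a), y ^ (-(1/p))| := by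
        rw [hQdef]
        simp only [two_zpow_succ i.1, ← hadef]
        rw [setAverage_congr (μ := volume) Ioo_ae_eq_Ico.symm]
        congr 1
        ext x
        rw [setAverage_congr (μ := volume) Ioo_ae_eq_Ico.symm]
      have hvol : volume (Q i.1) = ENNReal.ofReal a := by
        rw [hQdef]
        simp only [two_zpow_succ i.1, ← hadef, Real.volume_Ico]
        congr 1; ring
      rw [havg, hvol, ← ENNReal.ofReal_mul ha.le]
      exact ENNReal.ofReal_le_ofReal (hkey a ha)
    have htop : (⊤ : ℝ≥0∞) ≤ ENNReal.ofReal (K ^ p) := by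
      haveI : Infinite ((univ : Set ℕ)) := Set.infinite_univ.to_subtype
      calc (⊤ : ℝ≥0∞) = ∑' _ : (univ : Set ℕ), ENNReal.ofReal C :=
            (ENNReal.tsum_const_eq_top_of_ne_zero (by simp [hC])).symm
        _ ≤ _ := le_trans (ENNReal.tsum_le_tsum hsummand) hle
    exact absurd (top_le_iff.1 htop) ENNReal.ofReal_ne_top
end
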